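/- Let Φ be an irreducible root system and let (α_1, c_1+ε_{α_1}), …, (α_t, c_t+ε_{α_t}) be positive affine roots whose sum is a positive affine root (α, c+ε_α). Let β ∈ Φ ∪ {0} and c' ∈ {c, c+1} be such that (α, c+ε_α) ≤ (β, c'+ε_β) ≤ (0, c+1) in the coefficientwise partial order. Then there exist elements (β_1, c'_1+ε_{β_1}), …, (β_t, c'_t+ε_{β_t}) of the extended positive affine roots (Φ∪{0}) × ℤ whose sum is (β, c'+ε_β) and such that (α_i, c_i+ε_{α_i}) ≤ (β_i, c'_i+ε_{β_i}) ≤ (0, c_i+1) for every i. -/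

import Mathlib

open Finset

/-- A based, irreducible, reduced root system in a Euclidean space, together with
coordinate data with respect to the base `Δ`, the highest root, and the
extended base `Δ' = Δ ∪ {-highest}`. -/
structure BasedRootSystem (V : Type*) [NormedAddCommGroup V] [InnerProductSpace ℝ V] where
  Φ : Finset V
  zero_not_mem : (0 : V) ∉ Φ
  neg_mem : ∀ α ∈ Φ, -α ∈ Φ
  reduced : ∀ α ∈ Φ, ∀ c : ℝ, c • α ∈ Φ → c = 1 ∨ c = -1
  crystallographic : ∀ α ∈ Φ, ∀ β ∈ Φ, ∃ n : ℤ,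
    2 * (inner ℝ α β : ℝ) / (inner ℝ α α : ℝ) = (n : ℝ)
  reflect_mem : ∀ α ∈ Φ, ∀ β ∈ Φ, β - (2 * (inner ℝ β α : ℝ) / (inner ℝ α α : ℝ)) • α ∈ Φ
  Δ : Finset V
  base_sub : Δ ⊆ Φ
  indep : LinearIndependent ℝ (fun γ : Δ => (γ : V))
  coord : V → V → ℤ
  coord_zero : ∀ γ : V, coord 0 γ = 0
  coord_spec : ∀ α ∈ Φ, α = ∑ γ ∈ Δ, (coord α γ : ℝ) • γ
  coord_sign : ∀ α ∈ Φ, (∀ γ ∈ Δ, 0 ≤ coord α γ) ∨ (∀ γ ∈ Δ, coord α γ ≤ 0)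
  highest : V
  highest_mem : highest ∈ Φ
  highest_pos : ∀ γ ∈ Δ, 1 ≤ coord highest γ
  highest_is_highest : ∀ α ∈ Φ, ∀ γ ∈ Δ, coord α γ ≤ coord highest γ

namespace BasedRootSystem

variable {V : Type*} [NormedAddCommGroup V] [InnerProductSpace ℝ V] (B : BasedRootSystem V)

/-- `α` is positive relative to the base `Δ`. -/
def IsPos (α : V) : Prop := ∀ γ ∈ B.Δ, 0 ≤ B.coord α γ

/-- `ε_α` : `0` if `α` is positive, `1` otherwise. -/
noncomputable def eps (α : V) : ℤ := by
  classical exact if B.IsPos α then 0 else 1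

/-- The extended base `Δ' = Δ ∪ {-α_M}`. -/
noncomputable def extBase : Finset V := by
  classical exact insert (-B.highest) B.Δ

/-- The Coxeter number: one plus the height of the highest root. -/
def cox : ℤ := (∑ γ ∈ B.Δ, B.coord B.highest γ) + 1

/-- Coefficientwise order on affine roots `(α, n)`, via their decomposition in the
affine basis `Δ_aff`. -/
def affLe (p q : V × ℤ) : Prop :=
  p.2 ≤ q.2 ∧ ∀ γ ∈ B.Δ,
    B.coord p.1 γ + p.2 * B.coord B.highest γ ≤ B.coord q.1 γ + q.2 * B.coord B.highest γ

/-- The partial order on `Φ` induced from the affine root system: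
`α ≤ β` iff `(α, v + ε_α) ≤ (β, v + ε_β)` coefficientwise for every `v`. -/
def rle (α β : V) : Prop := B.affLe (α, B.eps α) (β, B.eps β)

/-- `c` is a decomposition of `α` as a nonnegative integral combination of the
extended base `Δ'`. -/
def IsDecomp (α : V) (c : V → ℕ) : Prop :=
  α = ∑ γ ∈ B.extBase, (c γ : ℝ) • γ

/-- The sum of the coefficients of a decomposition in `Δ'`. -/
noncomputable def decompSum (c : V → ℕ) : ℤ := ∑ γ ∈ B.extBase, (c γ : ℤ)

/-- A subset of `Φ` is `Δ'`-complete if it is downward closed for the order `rle`. -/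
def Complete (Ψ : Set V) : Prop :=
  ∀ α ∈ Ψ, ∀ β ∈ B.Φ, B.rle β α → β ∈ Ψ

/-- The set of ratios `(Σ ε_{α_i})/t` over nonempty zero-sum families in `X`. -/
noncomputable def ratioSet (X : Set V) : Set ℝ :=
  {q | ∃ (t : ℕ) (a : Fin t → V), 0 < t ∧ (∀ i, a i ∈ X) ∧ (∑ i, a i) = 0 ∧
        q = (∑ i, (B.eps (a i) : ℝ)) / (t : ℝ)}

end BasedRootSystem

namespace BasedRootSystem

variable {V : Type*} [NormedAddCommGroup V] [InnerProductSpace ℝ V] (B : BasedRootSystem V)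

local notation "⟪" x ", " y "⟫" => (inner ℝ x y : ℝ)

open scoped Classical

/-- Membership in `Φ ∪ {0}`. -/
def Mem' (x : V) : Prop := x ∈ B.Φ ∨ x = 0

lemma mem'_zero : B.Mem' 0 := Or.inr rfl

lemma mem'_neg {x : V} (h : B.Mem' x) : B.Mem' (-x) := by
  rcases h with h | h
  · exact Or.inl (B.neg_mem x h)
  · right; simp [h]

lemma coord_spec' {x : V} (h : B.Mem' x) :
    x = ∑ γ ∈ B.Δ, (B.coord x γ : ℝ) • γ := by
  rcases h with h | h
  · exact B.coord_spec x h
  · subst h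
    simp [B.coord_zero]

lemma coord_unique {n m : V → ℤ}
    (h : ∑ γ ∈ B.Δ, (n γ : ℝ) • γ = ∑ γ ∈ B.Δ, (m γ : ℝ) • γ) :
    ∀ γ ∈ B.Δ, n γ = m γ := by
  intro γ hγ
  have h0 : ∑ x ∈ B.Δ.attach, (((n (x:V) - m (x:V) : ℤ) : ℝ)) • (x : V) = 0 := by
    rw [Finset.sum_attach B.Δ (fun x => ((n x - m x : ℤ) : ℝ) • x)]
    push_cast
    simp only [sub_smul, Finset.sum_sub_distrib, h, sub_self]
  have h1 := linearIndependent_iff'.1 B.indep B.Δ.attach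
      (fun x => ((n (x:V) - m (x:V) : ℤ) : ℝ)) h0 ⟨γ, hγ⟩ (Finset.mem_attach _ _)
  have h2 : ((n γ - m γ : ℤ) : ℝ) = 0 := h1
  have h3 : (n γ - m γ : ℤ) = 0 := by exact_mod_cast h2
  omega

lemma coord_inj {x y : V} (hx : B.Mem' x) (hy : B.Mem' y)
    (h : ∀ γ ∈ B.Δ, B.coord x γ = B.coord y γ) : x = y := by
  rw [B.coord_spec' hx, B.coord_spec' hy]
  exact Finset.sum_congr rfl fun γ hγ => by rw [h γ hγ]

lemma coord_add {x y z : V} (hx : B.Mem' x) (hy : B.Mem' y) (hz : B.Mem' z)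
    (h : z = x + y) :
    ∀ γ ∈ B.Δ, B.coord z γ = B.coord x γ + B.coord y γ := by
  have key : ∑ γ ∈ B.Δ, ((B.coord x γ + B.coord y γ : ℤ) : ℝ) • γ = z := by
    push_cast
    simp only [add_smul, Finset.sum_add_distrib]
    rw [← B.coord_spec' hx, ← B.coord_spec' hy, h]
  exact B.coord_unique (n := B.coord z)
    (m := fun γ => B.coord x γ + B.coord y γ) (by rw [key, ← B.coord_spec' hz])

lemma coord_neg {x : V} (hx : B.Mem' x) :
    ∀ γ ∈ B.Δ, B.coord (-x) γ = -B.coord x γ := by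
  intro γ hγ
  have h := B.coord_add (B.mem'_neg hx) hx B.mem'_zero (by simp) γ hγ
  rw [B.coord_zero] at h
  omega

lemma coord_simple {γ : V} (hγ : γ ∈ B.Δ) :
    ∀ δ ∈ B.Δ, B.coord γ δ = if δ = γ then 1 else 0 := by
  have key : ∑ δ ∈ B.Δ, ((if δ = γ then (1:ℤ) else 0 : ℤ) : ℝ) • δ = γ := by
    have h1 : ∀ δ ∈ B.Δ, ((if δ = γ then (1:ℤ) else 0 : ℤ) : ℝ) • δ
        = if δ = γ then δ else 0 := by
      intro δ _; split <;> simp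
    rw [Finset.sum_congr rfl h1, Finset.sum_ite_eq' B.Δ γ (fun δ => δ), if_pos hγ]
  exact B.coord_unique
    ((B.coord_spec' (Or.inl (B.base_sub hγ))).symm.trans key.symm)

lemma coord_nonpos {x : V} (hx : x ∈ B.Φ) (h : ¬ B.IsPos x) :
    ∀ γ ∈ B.Δ, B.coord x γ ≤ 0 := by
  rcases B.coord_sign x hx with hp | hn
  · exact absurd hp h
  · exact hn

lemma eps_eq (x : V) : B.eps x = if B.IsPos x then 0 else 1 := rfl

lemma eps_of_pos {x : V} (h : B.IsPos x) : B.eps x = 0 := by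
  rw [B.eps_eq, if_pos h]

lemma eps_of_neg {x : V} (h : ¬ B.IsPos x) : B.eps x = 1 := by
  rw [B.eps_eq, if_neg h]

lemma isPos_zero : B.IsPos 0 := fun γ _ => by rw [B.coord_zero]

lemma eps_zero' : B.eps 0 = 0 := B.eps_of_pos B.isPos_zero

lemma eps_nonneg (x : V) : 0 ≤ B.eps x := by
  rw [B.eps_eq]; split <;> omega

lemma eps_le_one (x : V) : B.eps x ≤ 1 := by
  rw [B.eps_eq]; split <;> omega

lemma isPos_of_eps {x : V} (h : B.eps x = 0) : B.IsPos x := by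
  by_contra hc
  rw [B.eps_of_neg hc] at h
  exact one_ne_zero h

lemma root_ne_zero {x : V} (hx : x ∈ B.Φ) : x ≠ 0 := fun h => B.zero_not_mem (h ▸ hx)

lemma exists_coord_ne {x : V} (hx : x ∈ B.Φ) : ∃ γ ∈ B.Δ, B.coord x γ ≠ 0 := by
  by_contra h
  push_neg at h
  exact B.root_ne_zero hx
    (B.coord_inj (Or.inl hx) B.mem'_zero (fun γ hγ => by rw [h γ hγ, B.coord_zero]))

lemma inner_self_pos' {x : V} (hx : x ≠ 0) : 0 < ⟪x, x⟫ := by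
  rcases (real_inner_self_nonneg (x := x)).lt_or_eq with h | h
  · exact h
  · exact absurd (real_inner_self_nonpos.mp h.ge) hx

lemma ipp {x : V} (hx : x ∈ B.Φ) : 0 < ⟪x, x⟫ := inner_self_pos' (B.root_ne_zero hx)

lemma pairing_exists {x y : V} (hx : x ∈ B.Φ) (hy : y ∈ B.Φ) :
    ∃ n : ℤ, 2 * ⟪x, y⟫ = (n : ℝ) * ⟪x, x⟫ := by
  obtain ⟨n, hn⟩ := B.crystallographic x hx y hy
  refine ⟨n, ?_⟩
  rw [← hn]
  exact (div_mul_cancel₀ _ (ne_of_gt (B.ipp hx))).symm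

lemma reflect' {x y : V} (hx : x ∈ B.Φ) (hy : y ∈ B.Φ) {n : ℤ}
    (h : 2 * ⟪x, y⟫ = (n : ℝ) * ⟪x, x⟫) :
    y - (n : ℝ) • x ∈ B.Φ := by
  have h0 := ne_of_gt (B.ipp hx)
  have hc : (2 * (inner ℝ y x : ℝ) / (inner ℝ x x : ℝ)) = (n : ℝ) := by
    rw [real_inner_comm x y, h]
    exact mul_div_cancel_right₀ _ h0
  have h2 := B.reflect_mem x hx y hy
  rwa [hc] at h2

end BasedRootSystem

namespace BasedRootSystem

variable {V : Type*} [NormedAddCommGroup V] [InnerProductSpace ℝ V] (B : BasedRootSystem V)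

local notation "⟪" x ", " y "⟫" => (inner ℝ x y : ℝ)

open scoped Classical

lemma prod_le_three {x y : V} (hx : x ∈ B.Φ) (hy : y ∈ B.Φ) (h1 : y ≠ x) (h2 : y ≠ -x)
    {n m : ℤ} (hn : 2 * ⟪x, y⟫ = (n : ℝ) * ⟪x, x⟫) (hm : 2 * ⟪y, x⟫ = (m : ℝ) * ⟪y, y⟫) :
    n * m ≤ 3 := by
  have hxx := B.ipp hx
  have hyy := B.ipp hy
  have hcomm : ⟪y, x⟫ = ⟪x, y⟫ := real_inner_comm x y
  -- strict Cauchy-Schwarz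
  have hu : ⟪x, x⟫ • y - ⟪x, y⟫ • x ≠ 0 := by
    intro h0
    have h3 : ⟪x, x⟫ • y = ⟪x, y⟫ • x := by rwa [sub_eq_zero] at h0
    have h4 : y = (⟪x, x⟫⁻¹ * ⟪x, y⟫) • x := by
      rw [mul_smul, ← h3, inv_smul_smul₀ (ne_of_gt hxx)]
    rcases B.reduced x hx _ (h4 ▸ hy) with h | h
    · exact h1 (by rw [h4, h, one_smul])
    · exact h2 (by rw [h4, h, neg_one_smul])
  have hq := inner_self_pos' hu
  have hexp : ⟪⟪x, x⟫ • y - ⟪x, y⟫ • x, ⟪x, x⟫ • y - ⟪x, y⟫ • x⟫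
      = ⟪x, x⟫ ^ 2 * ⟪y, y⟫ - ⟪x, x⟫ * ⟪x, y⟫ ^ 2 := by
    simp only [inner_sub_left, inner_sub_right, real_inner_smul_left, real_inner_smul_right]
    rw [hcomm]; ring
  have hcs : ⟪x, y⟫ ^ 2 < ⟪x, x⟫ * ⟪y, y⟫ := by
    by_contra hcon
    push_neg at hcon
    have h5 := mul_le_mul_of_nonneg_left hcon hxx.le
    nlinarith [hq, hexp]
  rw [hcomm] at hm
  have hprod : ((n * m : ℤ) : ℝ) * (⟪x, x⟫ * ⟪y, y⟫) = 4 * ⟪x, y⟫ ^ 2 := by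
    push_cast
    linear_combination (-(2*⟪x,y⟫)) * hn + (-((n:ℝ) * ⟪x, x⟫)) * hm
  have h6 : ((n * m : ℤ) : ℝ) * (⟪x, x⟫ * ⟪y, y⟫) < 4 * (⟪x, x⟫ * ⟪y, y⟫) := by
    rw [hprod]; nlinarith [hcs]
  have h7 : ((n * m : ℤ) : ℝ) < 4 := lt_of_mul_lt_mul_right h6 (by positivity)
  have h8 : (n * m : ℤ) < 4 := by exact_mod_cast h7
  omega

lemma add_mem' {x y : V} (hx : x ∈ B.Φ) (hy : y ∈ B.Φ) (h : ⟪x, y⟫ < 0) :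
    x + y = 0 ∨ x + y ∈ B.Φ := by
  by_cases he : y = -x
  · left; rw [he]; abel
  right
  have hxx := B.ipp hx
  have hyy := B.ipp hy
  have hyx : y ≠ x := by
    rintro rfl
    exact absurd h (not_lt.2 hxx.le)
  obtain ⟨n, hn⟩ := B.pairing_exists hx hy
  obtain ⟨m, hm⟩ := B.pairing_exists hy hx
  have hcomm : ⟪y, x⟫ = ⟪x, y⟫ := real_inner_comm x y
  have hnneg : n < 0 := by
    by_contra hc
    push_neg at hc
    have : (0:ℝ) ≤ (n : ℝ) * ⟪x, x⟫ := by
      apply mul_nonneg _ hxx.le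
      exact_mod_cast hc
    linarith
  have hmneg : m < 0 := by
    by_contra hc
    push_neg at hc
    have : (0:ℝ) ≤ (m : ℝ) * ⟪y, y⟫ := by
      apply mul_nonneg _ hyy.le
      exact_mod_cast hc
    rw [hcomm] at hm
    linarith
  have h3 := B.prod_le_three hx hy hyx he hn hm
  have hone : n = -1 ∨ m = -1 := by
    by_contra hc
    push_neg at hc
    have : n ≤ -2 := by omega
    have : m ≤ -2 := by omega
    nlinarith
  rcases hone with rfl | rfl
  · have := B.reflect' hx hy hn
    rw [show ((-1 : ℤ) : ℝ) = -1 by norm_num, neg_one_smul, sub_neg_eq_add, add_comm] at this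
    exact this
  · have := B.reflect' hy hx hm
    rw [show ((-1 : ℤ) : ℝ) = -1 by norm_num, neg_one_smul, sub_neg_eq_add, add_comm] at this
    rwa [add_comm]

lemma sub_mem' {x y : V} (hx : x ∈ B.Φ) (hy : y ∈ B.Φ) (h : 0 < ⟪x, y⟫) :
    x - y = 0 ∨ x - y ∈ B.Φ := by
  have h2 : ⟪x, -y⟫ < 0 := by rw [inner_neg_right]; linarith
  have := B.add_mem' hx (B.neg_mem y hy) h2
  rwa [← sub_eq_add_neg] at this

lemma isPos_highest : B.IsPos B.highest := fun γ hγ => by linarith [B.highest_pos γ hγ]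

lemma inner_theta_simple {γ : V} (hγ : γ ∈ B.Δ) : 0 ≤ ⟪B.highest, γ⟫ := by
  by_contra h
  push_neg at h
  rcases B.add_mem' B.highest_mem (B.base_sub hγ) h with h0 | hΦ
  · have hγθ : γ = -B.highest := by
      have := eq_neg_of_add_eq_zero_right h0
      exact this
    have c1 := B.coord_simple hγ γ hγ
    rw [if_pos rfl] at c1
    have c2 := B.coord_neg (Or.inl B.highest_mem) γ hγ
    rw [← hγθ] at c2
    have := B.highest_pos γ hγ
    omega
  · have hc := B.coord_add (Or.inl B.highest_mem) (Or.inl (B.base_sub hγ))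
      (Or.inl hΦ) rfl γ hγ
    have hs := B.coord_simple hγ γ hγ
    rw [if_pos rfl] at hs
    have := B.highest_is_highest _ hΦ γ hγ
    omega

lemma inner_theta_nonneg {x : V} (hx : B.Mem' x) (hp : B.IsPos x) :
    0 ≤ ⟪B.highest, x⟫ := by
  rw [B.coord_spec' hx, inner_sum]
  apply Finset.sum_nonneg
  intro γ hγ
  rw [real_inner_smul_right]
  have h1 : (0:ℝ) ≤ (B.coord x γ : ℝ) := by exact_mod_cast hp γ hγ
  exact mul_nonneg h1 (B.inner_theta_simple hγ)

lemma pairing_theta_le {x : V} (hx : x ∈ B.Φ) (hne : x ≠ B.highest) :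
    2 * ⟪B.highest, x⟫ ≤ ⟪B.highest, B.highest⟫ := by
  set θ := B.highest with hθ
  have hθΦ := B.highest_mem
  have hθθ := B.ipp hθΦ
  obtain ⟨n, hn⟩ := B.pairing_exists hθΦ hx
  by_cases hle : n ≤ 1
  · rw [hn]
    have : (n:ℝ) ≤ 1 := by exact_mod_cast hle
    nlinarith
  push_neg at hle
  exfalso
  have hne' : x ≠ -θ := by
    rintro rfl
    rw [inner_neg_right] at hn
    have : ((n:ℝ) + 2) * ⟪θ, θ⟫ = 0 := by linarith
    have h2 : (n:ℝ) = -2 := by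
      rcases mul_eq_zero.mp this with h | h
      · linarith
      · linarith
    have : n = -2 := by exact_mod_cast h2
    omega
  obtain ⟨m, hm⟩ := B.pairing_exists hx hθΦ
  have hxx := B.ipp hx
  have hcomm : ⟪x, θ⟫ = ⟪θ, x⟫ := real_inner_comm θ x
  have hm1 : 1 ≤ m := by
    by_contra hc
    push_neg at hc
    have hm0 : m ≤ 0 := by omega
    have h4 : (m:ℝ) * ⟪x, x⟫ ≤ 0 :=
      mul_nonpos_of_nonpos_of_nonneg (by exact_mod_cast hm0) hxx.le
    have h5 : 0 < (n:ℝ) * ⟪θ, θ⟫ := by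
      have : (2:ℝ) ≤ n := by exact_mod_cast hle
      nlinarith
    rw [hcomm] at hm
    linarith
  have h3 := B.prod_le_three hθΦ hx hne hne' hn hm
  have hn3 : n ≤ 3 := by nlinarith
  have href := B.reflect' hθΦ hx hn
  have hyΦ : (n:ℝ) • θ - x ∈ B.Φ := by
    have := B.neg_mem _ href
    rwa [neg_sub] at this
  have hyco : ∀ γ ∈ B.Δ, B.coord ((n:ℝ) • θ - x) γ = n * B.coord θ γ - B.coord x γ := by
    have key : ∑ γ ∈ B.Δ, ((n * B.coord θ γ - B.coord x γ : ℤ) : ℝ) • γ = (n:ℝ) • θ - x := by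
      push_cast
      simp only [sub_smul, Finset.sum_sub_distrib, mul_smul]
      rw [← Finset.smul_sum, ← B.coord_spec' (Or.inl hθΦ), ← B.coord_spec' (Or.inl hx)]
    exact B.coord_unique ((B.coord_spec' (Or.inl hyΦ)).symm.trans key.symm)
  have hyeq : (n:ℝ) • θ - x = θ := by
    apply B.coord_inj (Or.inl hyΦ) (Or.inl hθΦ)
    intro γ hγ
    have h5 := hyco γ hγ
    have h6 := B.highest_is_highest _ hyΦ γ hγ
    have h7 := B.highest_is_highest _ hx γ hγ
    have h8 := B.highest_pos γ hγ
    have low : B.coord B.highest γ ≤ n * B.coord B.highest γ - B.coord x γ := by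
      have h9 : 2 * B.coord B.highest γ ≤ n * B.coord B.highest γ :=
        mul_le_mul_of_nonneg_right (by omega) (by omega)
      omega
    linarith [h5, h6, low]
  have hxeq : x = ((n - 1 : ℤ) : ℝ) • θ := by
    have h12 := hyeq
    rw [sub_eq_iff_eq_add] at h12
    have : x = (n:ℝ) • θ - θ := by rw [h12]; abel
    rw [this]
    push_cast
    rw [sub_smul, one_smul]
  rcases B.reduced θ hθΦ _ (hxeq ▸ hx) with h | h
  · have : (n:ℝ) - 1 = 1 := by push_cast at h; linarith
    have hn2 : n = 2 := by
      have h10 : (n:ℝ) = 2 := by linarith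
      exact_mod_cast h10
    apply hne
    rw [hxeq, hn2]
    norm_num
  · have : ((n:ℤ) - 1 : ℤ) = -1 := by exact_mod_cast h
    omega

end BasedRootSystem

namespace BasedRootSystem

variable {V : Type*} [NormedAddCommGroup V] [InnerProductSpace ℝ V] (B : BasedRootSystem V)

local notation "⟪" x ", " y "⟫" => (inner ℝ x y : ℝ)

open scoped Classical

lemma claimD {ι : Type*} {γ : V} (hγ : γ ∈ B.Δ) :
    ∀ (n : ℕ) (s : Finset ι) (q : ι → V), s.card = n →
      (∀ i ∈ s, q i = 0 ∨ (q i ∈ B.Φ ∧ 0 ≤ ⟪γ, q i⟫ ∧ q i + γ ∉ B.Φ)) →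
      (∑ i ∈ s, q i) ∈ B.Φ → (∑ i ∈ s, q i) + γ ∉ B.Φ := by
  intro n
  induction n using Nat.strong_induction_on with
  | _ n IH =>
  intro s q hcard hq hr hy
  have hγΦ := B.base_sub hγ
  have hγγ := B.ipp hγΦ
  set r : V := ∑ i ∈ s, q i with hrdef
  set y : V := r + γ with hydef
  have hyΦ : y ∈ B.Φ := hy
  have hyy := B.ipp hyΦ
  -- each inner term nonneg
  have hterm : ∀ i ∈ s, 0 ≤ ⟪γ, q i⟫ := by
    intro i hi
    rcases hq i hi with h0 | ⟨_, h1, _⟩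
    · rw [h0, inner_zero_right]
    · exact h1
  have hsplit : ⟪γ, r⟫ = ∑ i ∈ s, ⟪γ, q i⟫ := by
    rw [hrdef, inner_sum]
  have hsum0 : 0 ≤ ⟪γ, r⟫ := by
    rw [hsplit]; exact Finset.sum_nonneg hterm
  obtain ⟨k, hk⟩ := B.pairing_exists hγΦ hyΦ
  have hipγy : ⟪γ, y⟫ = ⟪γ, r⟫ + ⟪γ, γ⟫ := by rw [hydef, inner_add_right]
  have hk2 : (2:ℝ) ≤ (k:ℝ) := by
    have h2 : 2 * ⟪γ, γ⟫ ≤ (k:ℝ) * ⟪γ, γ⟫ := by linarith [hk, hipγy, hsum0]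
    exact (mul_le_mul_iff_of_pos_right hγγ).mp (by linarith)
  have hk2' : 2 ≤ k := by exact_mod_cast hk2
  have hyneγ : y ≠ γ := by
    intro h
    apply B.zero_not_mem
    have h0 : r + γ = γ := h
    have hr0 : r = 0 := add_eq_right.mp h0
    rwa [hr0] at hr
  have hyneγ' : y ≠ -γ := by
    intro h
    rw [h, inner_neg_right] at hk
    have h2 : ((k:ℝ) + 2) * ⟪γ, γ⟫ = 0 := by linear_combination -hk
    rcases mul_eq_zero.mp h2 with h1 | h1
    · linarith [hk2]
    · linarith
  obtain ⟨m, hm⟩ := B.pairing_exists hyΦ hγΦ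
  have hcomm : ⟪y, γ⟫ = ⟪γ, y⟫ := real_inner_comm γ y
  have hm1 : 1 ≤ m := by
    by_contra hc
    push_neg at hc
    have hm0 : (m:ℝ) ≤ 0 := by exact_mod_cast (by omega : m ≤ 0)
    have h4 : (m:ℝ) * ⟪y, y⟫ ≤ 0 := mul_nonpos_of_nonpos_of_nonneg hm0 hyy.le
    have h5 : 0 < (k:ℝ) * ⟪γ, γ⟫ := by nlinarith
    rw [hcomm] at hm
    linarith
  have h3 := B.prod_le_three hγΦ hyΦ hyneγ hyneγ' hk hm
  have hk3 : k ≤ 3 := by nlinarith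
  have hmle : m ≤ 1 := by nlinarith
  have hmeq : m = 1 := le_antisymm hmle hm1
  have hyyval : ⟪y, y⟫ = (k:ℝ) * ⟪γ, γ⟫ := by
    rw [hmeq] at hm
    push_cast at hm
    rw [hcomm] at hm
    linarith [hk, hm]
  have hreq : r = y - γ := by rw [hydef]; abel
  have hry : 0 < ⟪r, y⟫ := by
    have h6 : ⟪r, y⟫ = ⟪y, y⟫ - ⟪γ, y⟫ := by
      rw [hreq, inner_sub_left]
    have h7 : 2 * ⟪γ, y⟫ = (k:ℝ) * ⟪γ, γ⟫ := hk
    have h8 : 2 * ⟪r, y⟫ = (k:ℝ) * ⟪γ, γ⟫ := by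
      rw [h6]; rw [hyyval]; linarith
    have h9 : 2 * ⟪γ, γ⟫ ≤ (k:ℝ) * ⟪γ, γ⟫ := (mul_le_mul_iff_of_pos_right hγγ).mpr hk2
    linarith
  have hsum2 : ∑ i ∈ s, ⟪q i, y⟫ = ⟪r, y⟫ := by
    rw [hrdef, sum_inner]
  obtain ⟨i, his, hi⟩ : ∃ i ∈ s, 0 < ⟪q i, y⟫ := by
    by_contra h
    push_neg at h
    have := Finset.sum_nonpos h
    linarith [hsum2, hry]
  rcases hq i his with h0 | ⟨hQΦ, hQγ, hQb⟩
  · rw [h0, inner_zero_left] at hi; linarith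
  -- the chosen root
  have hQle : ⟪γ, q i⟫ ≤ ⟪γ, r⟫ := by
    rw [hsplit]
    exact Finset.single_le_sum hterm his
  have hγr : ⟪γ, r⟫ = ⟪γ, y⟫ - ⟪γ, γ⟫ := by linarith [hipγy]
  have hQney : q i ≠ y := by
    intro h
    rw [h] at hQle
    linarith [hγr, hγγ]
  rcases B.sub_mem' hQΦ hyΦ hi with h0 | hzΦ
  · exact hQney (sub_eq_zero.mp h0)
  have hγz : ⟪γ, q i - y⟫ < 0 := by
    rw [inner_sub_right]
    linarith [hQle, hγr, hγγ]
  have hγz' : ⟪q i - y, γ⟫ < 0 := by rwa [real_inner_comm] at hγz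
  rcases B.add_mem' hzΦ hγΦ hγz' with h0 | huΦ
  · -- q i = r, so q i + γ = y ∈ Φ, contradiction
    have h3 : q i - y = -γ := eq_neg_of_add_eq_zero_left h0
    have hQr : q i = r := by
      rw [hreq]
      rw [sub_eq_iff_eq_add.mp h3]
      abel
    exact hQb (by rw [hQr, ← hydef]; exact hyΦ)
  -- recurse on s.erase i
  have hcardpos : 0 < n := by
    rw [← hcard]
    exact Finset.card_pos.mpr ⟨i, his⟩
  have herase : ∑ j ∈ s.erase i, q j = r - q i := by
    have h1 := Finset.sum_erase_add s q his
    rw [← hrdef] at h1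
    exact eq_sub_of_add_eq h1
  have hu' : q i - r ∈ B.Φ := by
    have h1 : q i - y + γ = q i - r := by rw [hreq]; abel
    rwa [h1] at huΦ
  have hr' : r - q i ∈ B.Φ := by
    have h1 := B.neg_mem _ hu'
    rwa [neg_sub] at h1
  have hy' : (r - q i) + γ ∈ B.Φ := by
    have h1 : (r - q i) + γ = -(q i - y) := by rw [hydef]; abel
    rw [h1]
    exact B.neg_mem _ hzΦ
  exact IH (s.erase i).card
    (by rw [Finset.card_erase_of_mem his, hcard]; omega)
    (s.erase i) q rfl
    (fun j hj => hq j (Finset.mem_of_mem_erase hj))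
    (by rw [herase]; exact hr')
    (by rw [herase]; exact hy')

end BasedRootSystem

namespace BasedRootSystem

variable {V : Type*} [NormedAddCommGroup V] [InnerProductSpace ℝ V] (B : BasedRootSystem V)

local notation "⟪" x ", " y "⟫" => (inner ℝ x y : ℝ)

open scoped Classical

/-- Rigid extended affine roots: `(x, ε_x)` for `x ∈ Φ`, and `(0,1)`. -/
def Rig (p : V × ℤ) : Prop := (p.1 ∈ B.Φ ∧ p.2 = B.eps p.1) ∨ (p.1 = 0 ∧ p.2 = 1)

lemma rig_mem' {p : V × ℤ} (h : B.Rig p) : B.Mem' p.1 := by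
  rcases h with ⟨h, _⟩ | ⟨h, _⟩
  · exact Or.inl h
  · exact Or.inr h

lemma isPos_simple {γ : V} (hγ : γ ∈ B.Δ) : B.IsPos γ := by
  intro δ hδ
  rw [B.coord_simple hγ δ hδ]
  split <;> omega

lemma affLe_refl (p : V × ℤ) : B.affLe p p := ⟨le_refl _, fun _ _ => le_refl _⟩

lemma affLe_trans {p q r : V × ℤ} (h1 : B.affLe p q) (h2 : B.affLe q r) : B.affLe p r :=
  ⟨le_trans h1.1 h2.1, fun γ hγ => le_trans (h1.2 γ hγ) (h2.2 γ hγ)⟩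

lemma affLe_shift {x y : V} {m n : ℤ} (c : ℤ) (h : B.affLe (x, m) (y, n)) :
    B.affLe (x, m + c) (y, n + c) := by
  obtain ⟨hl, hc⟩ := h
  refine ⟨by omega, fun γ hγ => ?_⟩
  have := hc γ hγ
  simp only at this ⊢
  nlinarith [this]

lemma rig_window {p : V × ℤ} (h : B.Rig p) : B.affLe p ((0 : V), (1 : ℤ)) := by
  constructor
  · rcases h with ⟨_, he⟩ | ⟨_, he⟩
    · rw [he]; exact B.eps_le_one _
    · omega
  · intro γ hγ
    simp only [B.coord_zero, one_mul, zero_add]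
    rcases h with ⟨hΦ, he⟩ | ⟨h0, he⟩
    · by_cases hpos : B.IsPos p.1
      · rw [he, B.eps_of_pos hpos]
        have := B.highest_is_highest _ hΦ γ hγ
        omega
      · rw [he, B.eps_of_neg hpos]
        have := B.coord_nonpos hΦ hpos γ hγ
        omega
    · rw [h0, B.coord_zero, he]
      omega

lemma add_gamma {γ : V} (hγ : γ ∈ B.Δ) {τ τ' : V × ℤ} (hτ : B.Rig τ) (hτ' : B.Rig τ')
    (h1 : τ'.1 = τ.1 + γ) (h2 : τ'.2 = τ.2) {t : ℕ} (p : Fin t → V × ℤ)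
    (hp : ∀ i, B.Rig (p i)) (hsum : ∑ i, (p i).1 = τ.1) :
    ∃ i, B.Rig ((p i).1 + γ, (p i).2) := by
  have hγΦ := B.base_sub hγ
  by_contra hcon
  push_neg at hcon
  have hblocked : ∀ i, (p i).1 = 0 ∨
      ((p i).1 ∈ B.Φ ∧ 0 ≤ ⟪γ, (p i).1⟫ ∧ (p i).1 + γ ∉ B.Φ) := by
    intro i
    rcases hp i with ⟨hiΦ, hie⟩ | ⟨hi0, _⟩
    swap
    · exact Or.inl hi0
    right
    have hneg : (p i).1 ≠ -γ := by
      intro hq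
      apply hcon i
      right
      constructor
      · rw [hq]; abel
      · rw [hie, hq]
        apply B.eps_of_neg
        intro hpos
        have h3 := hpos γ hγ
        have hcoγ := B.coord_neg (Or.inl hγΦ) γ hγ
        have hs := B.coord_simple hγ γ hγ
        rw [if_pos rfl] at hs
        omega
    have hnotΦ : (p i).1 + γ ∉ B.Φ := by
      intro hmem
      apply hcon i
      left
      refine ⟨hmem, ?_⟩
      rw [hie]
      by_cases hpos : B.IsPos (p i).1
      · rw [B.eps_of_pos hpos]
        have hpos2 : B.IsPos ((p i).1 + γ) := by
          intro δ hδ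
          have hadd := B.coord_add (Or.inl hiΦ) (Or.inl hγΦ) (Or.inl hmem) rfl δ hδ
          have hsim := B.coord_simple hγ δ hδ
          have h4 := hpos δ hδ
          rw [hadd, hsim]
          split <;> omega
        rw [B.eps_of_pos hpos2]
      · by_cases hpos2 : B.IsPos ((p i).1 + γ)
        · exfalso
          have hcoff : ∀ δ ∈ B.Δ, δ ≠ γ → B.coord (p i).1 δ = 0 := by
            intro δ hδ hne
            have hadd := B.coord_add (Or.inl hiΦ) (Or.inl hγΦ) (Or.inl hmem) rfl δ hδ
            have hsim := B.coord_simple hγ δ hδ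
            rw [if_neg hne] at hsim
            have h4 := hpos2 δ hδ
            have h5 := B.coord_nonpos hiΦ hpos δ hδ
            omega
          have hρeq : (p i).1 = ((B.coord (p i).1 γ : ℤ) : ℝ) • γ := by
            have hs := B.coord_spec' (Or.inl hiΦ)
            rw [Finset.sum_eq_single_of_mem γ hγ
              (fun δ hδ hne => by rw [hcoff δ hδ hne]; simp)] at hs
            exact hs
          rcases B.reduced γ hγΦ _ (hρeq ▸ hiΦ) with h | h
          · have hc1 : B.coord (p i).1 γ = 1 := by exact_mod_cast h
            apply hpos
            rw [show (p i).1 = γ by rw [hρeq, hc1]; norm_num]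
            exact B.isPos_simple hγ
          · have hc1 : B.coord (p i).1 γ = -1 := by exact_mod_cast h
            apply hneg
            rw [hρeq, hc1]
            norm_num
        · rw [B.eps_of_neg hpos, B.eps_of_neg hpos2]
    have hinner : 0 ≤ ⟪γ, (p i).1⟫ := by
      by_contra hlt
      push_neg at hlt
      have hlt' : ⟪(p i).1, γ⟫ < 0 := by rwa [real_inner_comm] at hlt
      rcases B.add_mem' hiΦ hγΦ hlt' with h0 | hΦ2
      · exact hneg (eq_neg_of_add_eq_zero_left h0)
      · exact hnotΦ hΦ2
    exact ⟨hiΦ, hinner, hnotΦ⟩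
  rcases hτ with ⟨hrΦ, _⟩ | ⟨hr0, hre⟩
  swap
  · -- τ.1 = 0 : τ' = (γ, 1), not rigid
    rcases hτ' with ⟨_, he'⟩ | ⟨h0', _⟩
    · have hγ1 : τ'.1 = γ := by rw [h1, hr0, zero_add]
      rw [hγ1, B.eps_of_pos (B.isPos_simple hγ)] at he'
      omega
    · rw [h1, hr0, zero_add] at h0'
      exact B.root_ne_zero hγΦ h0'
  rcases hτ' with ⟨hRΦ, _⟩ | ⟨hR0, _⟩
  · exact B.claimD hγ Finset.univ.card Finset.univ (fun i => (p i).1) rfl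
      (fun i _ => hblocked i) (by rw [hsum]; exact hrΦ)
      (by rw [hsum, ← h1]; exact hRΦ)
  · -- τ.1 = -γ, contradiction with nonneg inner sums
    have hrγ : τ.1 = -γ := by
      have h3 : τ.1 + γ = 0 := by rw [← h1, hR0]
      exact eq_neg_of_add_eq_zero_left h3
    have hsn : 0 ≤ ⟪γ, τ.1⟫ := by
      rw [← hsum, inner_sum]
      apply Finset.sum_nonneg
      intro i _
      rcases hblocked i with h0 | ⟨_, h4, _⟩
      · rw [h0, inner_zero_right]
      · exact h4
    rw [hrγ, inner_neg_right] at hsn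
    linarith [B.ipp hγΦ]

lemma add_theta {τ τ' : V × ℤ} (hτ : B.Rig τ) (hτ' : B.Rig τ')
    (h1 : τ'.1 = τ.1 - B.highest) (h2 : τ'.2 = τ.2 + 1) {t : ℕ} (p : Fin t → V × ℤ)
    (hp : ∀ i, B.Rig (p i)) (hsum : ∑ i, (p i).1 = τ.1) :
    ∃ i, B.Rig ((p i).1 - B.highest, (p i).2 + 1) := by
  by_contra hcon
  push_neg at hcon
  have hτ2 : τ.2 = 0 := by
    have hup : τ.2 + 1 ≤ 1 := by
      rcases hτ' with ⟨_, he'⟩ | ⟨_, he'⟩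
      · rw [← h2, he']; exact B.eps_le_one _
      · omega
    have hdn : 0 ≤ τ.2 := by
      rcases hτ with ⟨_, he⟩ | ⟨_, he⟩
      · rw [he]; exact B.eps_nonneg _
      · omega
    omega
  have hrΦ : τ.1 ∈ B.Φ := by
    rcases hτ with ⟨h, _⟩ | ⟨_, he⟩
    · exact h
    · omega
  have hax : ∀ i, ⟪B.highest, (p i).1⟫ ≤ 0 := by
    intro i
    rcases hp i with ⟨hiΦ, hie⟩ | ⟨hi0, _⟩
    swap
    · rw [hi0, inner_zero_right]
    by_cases hpos : B.IsPos (p i).1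
    · by_contra hlt
      push_neg at hlt
      by_cases heq : (p i).1 = B.highest
      · apply hcon i
        right
        constructor
        · rw [heq]; abel
        · show (p i).2 + 1 = 1
          rw [hie, B.eps_of_pos hpos]
          norm_num
      · have hlt' : 0 < ⟪(p i).1, B.highest⟫ := by rwa [real_inner_comm] at hlt
        rcases B.sub_mem' hiΦ B.highest_mem hlt' with h0 | hΦ2
        · exact heq (sub_eq_zero.mp h0)
        · apply hcon i
          left
          refine ⟨hΦ2, ?_⟩
          show (p i).2 + 1 = B.eps ((p i).1 - B.highest)
          rw [hie, B.eps_of_pos hpos]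
          have hneg2 : ¬ B.IsPos ((p i).1 - B.highest) := by
            intro hpos2
            apply B.root_ne_zero hΦ2
            apply B.coord_inj (Or.inl hΦ2) B.mem'_zero
            intro δ hδ
            have hadd := B.coord_add (Or.inl hΦ2) (Or.inl B.highest_mem)
              (Or.inl hiΦ) (by abel) δ hδ
            have h4 := hpos2 δ hδ
            have h5 := B.highest_is_highest _ hiΦ δ hδ
            rw [B.coord_zero]
            omega
          rw [B.eps_of_neg hneg2]
          norm_num
    · have hnegmem : -(p i).1 ∈ B.Φ := B.neg_mem _ hiΦ
      have hnp : B.IsPos (-(p i).1) := by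
        intro δ hδ
        have h4 := B.coord_neg (Or.inl hiΦ) δ hδ
        have h5 := B.coord_nonpos hiΦ hpos δ hδ
        omega
      have h6 := B.inner_theta_nonneg (Or.inl hnegmem) hnp
      rw [inner_neg_right] at h6
      linarith
  have hsn : ⟪B.highest, τ.1⟫ ≤ 0 := by
    rw [← hsum, inner_sum]
    exact Finset.sum_nonpos (fun i _ => hax i)
  rcases hτ' with ⟨hRΦ, hRe⟩ | ⟨hR0, _⟩
  · have hRe1 : τ'.2 = 1 := by omega
    have hRneg : ¬ B.IsPos τ'.1 := by
      intro hpos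
      rw [B.eps_of_pos hpos] at hRe
      omega
    have hRneθ : τ'.1 ≠ -B.highest := by
      intro h
      apply B.root_ne_zero hrΦ
      have h3 : τ.1 = τ'.1 + B.highest := by rw [h1]; abel
      rw [h3, h]
      abel
    have hmR : -τ'.1 ∈ B.Φ := B.neg_mem _ hRΦ
    have hmRne : -τ'.1 ≠ B.highest := by
      intro h
      exact hRneθ (by rw [← h, neg_neg])
    have h7 := B.pairing_theta_le hmR hmRne
    rw [inner_neg_right] at h7
    have hτR : ⟪B.highest, τ.1⟫ = ⟪B.highest, τ'.1⟫ + ⟪B.highest, B.highest⟫ := by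
      have h3 : τ.1 = τ'.1 + B.highest := by rw [h1]; abel
      rw [h3, inner_add_right]
    linarith [B.ipp B.highest_mem]
  · have h3 : τ.1 = B.highest := sub_eq_zero.mp (h1.symm.trans hR0)
    rw [h3] at hsn
    linarith [B.ipp B.highest_mem]

end BasedRootSystem

namespace BasedRootSystem

variable {V : Type*} [NormedAddCommGroup V] [InnerProductSpace ℝ V] (B : BasedRootSystem V)

local notation "⟪" x ", " y "⟫" => (inner ℝ x y : ℝ)

open scoped Classical

lemma ne_zero_coord {x : V} (hx : x ∈ B.Φ) (h : ∀ γ ∈ B.Δ, B.coord x γ = 0) : False :=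
  B.root_ne_zero hx (B.coord_inj (Or.inl hx) B.mem'_zero
    (fun γ hγ => by rw [h γ hγ, B.coord_zero]))

lemma neg_of_nonpos {x : V} (hx : x ∈ B.Φ) (h : ∀ γ ∈ B.Δ, B.coord x γ ≤ 0) :
    ¬ B.IsPos x := by
  intro hp
  exact B.ne_zero_coord hx (fun γ hγ => le_antisymm (h γ hγ) (hp γ hγ))

lemma diff_sum {x y : V} (hx : B.Mem' x) (hy : B.Mem' y) :
    y - x = ∑ γ ∈ B.Δ, ((B.coord y γ - B.coord x γ : ℤ) : ℝ) • γ := by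
  push_cast
  simp only [sub_smul, Finset.sum_sub_distrib]
  rw [← B.coord_spec' hx, ← B.coord_spec' hy]

lemma theta_diff_sum {x y : V} (hx : B.Mem' x) (hy : B.Mem' y) :
    B.highest + y - x
      = ∑ γ ∈ B.Δ, ((B.coord B.highest γ + B.coord y γ - B.coord x γ : ℤ) : ℝ) • γ := by
  push_cast
  simp only [add_smul, sub_smul, Finset.sum_sub_distrib, Finset.sum_add_distrib]
  rw [← B.coord_spec' hx, ← B.coord_spec' hy, ← B.coord_spec' (Or.inl B.highest_mem)]

lemma exists_good {d : V → ℤ} (hd : ∀ γ ∈ B.Δ, 0 ≤ d γ) {v : V}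
    (hv : v = ∑ γ ∈ B.Δ, (d γ : ℝ) • γ) (hvne : v ≠ 0) :
    ∃ γ ∈ B.Δ, 1 ≤ d γ ∧ 0 < ⟪v, γ⟫ := by
  have hvv := inner_self_pos' hvne
  have hexp : ⟪v, v⟫ = ∑ γ ∈ B.Δ, (d γ : ℝ) * ⟪v, γ⟫ := by
    calc ⟪v, v⟫ = ⟪v, ∑ γ ∈ B.Δ, (d γ : ℝ) • γ⟫ := by rw [← hv]
    _ = ∑ γ ∈ B.Δ, (d γ : ℝ) * ⟪v, γ⟫ := by
        rw [inner_sum]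
        exact Finset.sum_congr rfl fun γ _ => real_inner_smul_right _ _ _
  by_contra h
  push_neg at h
  have hterm : ∀ γ ∈ B.Δ, (d γ : ℝ) * ⟪v, γ⟫ ≤ 0 := by
    intro γ hγ
    rcases lt_or_ge (d γ) 1 with h1 | h1
    · have : d γ = 0 := by have := hd γ hγ; omega
      rw [this]
      norm_num
    · have h2 := h γ hγ h1
      apply mul_nonpos_of_nonneg_of_nonpos _ h2
      exact_mod_cast le_trans (hd γ hγ) (le_refl _)
  have := Finset.sum_nonpos hterm
  linarith [hexp ▸ hvv]

/-- A single affine-simple step. -/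
def StepRel (σ τ : V × ℤ) : Prop :=
  (∃ γ ∈ B.Δ, τ.1 = σ.1 + γ ∧ τ.2 = σ.2) ∨
  (τ.1 = σ.1 - B.highest ∧ τ.2 = σ.2 + 1)

end BasedRootSystem

namespace BasedRootSystem

variable {V : Type*} [NormedAddCommGroup V] [InnerProductSpace ℝ V] (B : BasedRootSystem V)

local notation "⟪" x ", " y "⟫" => (inner ℝ x y : ℝ)

open scoped Classical

lemma exists_step {bot top : V × ℤ} (hbΦ : bot.1 ∈ B.Φ) (hbe : bot.2 = B.eps bot.1)
    (ht : B.Rig top) (hle : B.affLe bot top) (hne : bot ≠ top) :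
    ∃ mid, B.Rig mid ∧
      ((B.affLe bot mid ∧ B.StepRel mid top) ∨
       (mid.1 ∈ B.Φ ∧ mid.2 = B.eps mid.1 ∧ B.StepRel bot mid ∧ B.affLe mid top)) := by
  obtain ⟨hlv, hco⟩ := hle
  have hθΦ := B.highest_mem
  rcases ht with ⟨htΦ, hte⟩ | ⟨ht0, hte⟩
  swap
  · -- Case (A): top = (0, 1)
    by_cases hpos : B.IsPos bot.1
    · -- mid = (θ, 0)
      have hb0 : bot.2 = 0 := by rw [hbe, B.eps_of_pos hpos]
      have hrig : B.Rig (B.highest, (0:ℤ)) :=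
        Or.inl ⟨hθΦ, (B.eps_of_pos B.isPos_highest).symm⟩
      have haff : B.affLe bot (B.highest, 0) := by
        constructor
        · simp only; omega
        · intro γ hγ
          simp only
          have h3 := B.highest_is_highest _ hbΦ γ hγ
          rw [hb0]
          omega
      have hstep : B.StepRel (B.highest, (0:ℤ)) top := by
        right
        constructor
        · rw [ht0]; simp
        · simp only; omega
      exact ⟨_, hrig, Or.inl ⟨haff, hstep⟩⟩
    · obtain ⟨γ, hγ, hne0⟩ := B.exists_coord_ne hbΦ
      have hb1 : bot.2 = 1 := by rw [hbe, B.eps_of_neg hpos]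
      have hcbγ : B.coord bot.1 γ < 0 :=
        lt_of_le_of_ne (B.coord_nonpos hbΦ hpos γ hγ) hne0
      have hmγΦ : -γ ∈ B.Φ := B.neg_mem _ (B.base_sub hγ)
      have hmγneg : ¬ B.IsPos (-γ) := by
        intro hp
        have h3 := hp γ hγ
        have h4 := B.coord_neg (Or.inl (B.base_sub hγ)) γ hγ
        have h5 := B.coord_simple hγ γ hγ
        rw [if_pos rfl] at h5
        omega
      have hrig : B.Rig (-γ, (1:ℤ)) := Or.inl ⟨hmγΦ, (B.eps_of_neg hmγneg).symm⟩
      have haff : B.affLe bot (-γ, 1) := by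
        constructor
        · simp only; omega
        · intro δ hδ
          simp only
          have h4 := B.coord_neg (Or.inl (B.base_sub hγ)) δ hδ
          have h5 := B.coord_simple hγ δ hδ
          have h6 := B.coord_nonpos hbΦ hpos δ hδ
          have h7 : B.coord bot.1 δ ≤ B.coord (-γ) δ := by
            rw [h4, h5]
            by_cases heq : δ = γ
            · rw [if_pos heq]
              subst heq
              omega
            · rw [if_neg heq]
              omega
          rw [hb1]
          omega
      have hstep : B.StepRel (-γ, (1:ℤ)) top := by
        left
        exact ⟨γ, hγ, by rw [ht0]; simp, by simp only; omega⟩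
      exact ⟨_, hrig, Or.inl ⟨haff, hstep⟩⟩
  -- top.1 ∈ Φ
  by_cases hbpos : B.IsPos bot.1 <;> by_cases htpos : B.IsPos top.1
  · -- Case (B): both positive
    have hb0 : bot.2 = 0 := by rw [hbe, B.eps_of_pos hbpos]
    have ht0' : top.2 = 0 := by rw [hte, B.eps_of_pos htpos]
    have hd : ∀ δ ∈ B.Δ, 0 ≤ B.coord top.1 δ - B.coord bot.1 δ := by
      intro δ hδ
      have h3 := hco δ hδ
      rw [hb0, ht0'] at h3
      omega
    have hvne : top.1 - bot.1 ≠ 0 := by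
      intro h
      apply hne
      have h1 : top.1 = bot.1 := by
        have := sub_eq_zero.mp h
        exact this
      exact Prod.ext h1.symm (by omega)
    obtain ⟨γ, hγ, hd1, hvγ⟩ := B.exists_good (d := fun δ => B.coord top.1 δ - B.coord bot.1 δ)
      hd (B.diff_sum (Or.inl hbΦ) (Or.inl htΦ)) hvne
    have hγΦ := B.base_sub hγ
    rw [inner_sub_left] at hvγ
    by_cases hbγ : ⟪bot.1, γ⟫ < 0
    · -- raise : mid = (bot.1 + γ, 0)
      rcases B.add_mem' hbΦ hγΦ hbγ with h0 | hmem
      · exfalso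
        have h3 : bot.1 = -γ := eq_neg_of_add_eq_zero_left h0
        have h4 := hbpos γ hγ
        have h5 := B.coord_neg (Or.inl hγΦ) γ hγ
        have h6 := B.coord_simple hγ γ hγ
        rw [if_pos rfl] at h6
        rw [h3] at h4
        omega
      have hmpos : B.IsPos (bot.1 + γ) := by
        intro δ hδ
        have hadd := B.coord_add (Or.inl hbΦ) (Or.inl hγΦ) (Or.inl hmem) rfl δ hδ
        have hsim := B.coord_simple hγ δ hδ
        have h4 := hbpos δ hδ
        rw [hadd, hsim]
        split <;> omega
      have hrig : B.Rig (bot.1 + γ, (0:ℤ)) := Or.inl ⟨hmem, (B.eps_of_pos hmpos).symm⟩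
      have hstep : B.StepRel bot (bot.1 + γ, (0:ℤ)) := Or.inl ⟨γ, hγ, rfl, by simp only; omega⟩
      have haff : B.affLe (bot.1 + γ, (0:ℤ)) top := by
        constructor
        · simp only; omega
        · intro δ hδ
          simp only
          have hadd := B.coord_add (Or.inl hbΦ) (Or.inl hγΦ) (Or.inl hmem) rfl δ hδ
          have hsim := B.coord_simple hγ δ hδ
          have h3 := hd δ hδ
          rw [hadd, hsim, ht0']
          by_cases heq : δ = γ
          · rw [if_pos heq]
            subst heq
            omega
          · rw [if_neg heq]
            omega
      exact ⟨_, hrig, Or.inr ⟨hmem, (B.eps_of_pos hmpos).symm, hstep, haff⟩⟩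
    · -- peel : mid = (top.1 - γ, 0)
      push_neg at hbγ
      have htγ : 0 < ⟪top.1, γ⟫ := by linarith
      rcases B.sub_mem' htΦ hγΦ htγ with h0 | hmem
      · exfalso
        have h3 : top.1 = γ := sub_eq_zero.mp h0
        apply B.ne_zero_coord hbΦ
        intro δ hδ
        have h4 := hd δ hδ
        have h5 := B.coord_simple hγ δ hδ
        rw [h3] at h4
        rw [h5] at h4
        have h6 := hbpos δ hδ
        by_cases heq : δ = γ
        · rw [if_pos heq] at h4
          have := hd1
          rw [h3] at hd1
          have h7 := B.coord_simple hγ γ hγ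
          rw [if_pos rfl] at h7
          rw [h7] at hd1
          subst heq
          omega
        · rw [if_neg heq] at h4
          omega
      have hmpos : B.IsPos (top.1 - γ) := by
        intro δ hδ
        have hadd := B.coord_add (Or.inl hmem) (Or.inl hγΦ) (Or.inl htΦ) (by abel) δ hδ
        have hsim := B.coord_simple hγ δ hδ
        have h3 := hd δ hδ
        have h4 := hbpos δ hδ
        by_cases heq : δ = γ
        · rw [if_pos heq] at hsim
          subst heq
          omega
        · rw [if_neg heq] at hsim
          omega
      have hrig : B.Rig (top.1 - γ, (0:ℤ)) := Or.inl ⟨hmem, (B.eps_of_pos hmpos).symm⟩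
      have hstep : B.StepRel (top.1 - γ, (0:ℤ)) top :=
        Or.inl ⟨γ, hγ, by simp, by simp only; omega⟩
      have haff : B.affLe bot (top.1 - γ, (0:ℤ)) := by
        constructor
        · simp only; omega
        · intro δ hδ
          simp only
          have hadd := B.coord_add (Or.inl hmem) (Or.inl hγΦ) (Or.inl htΦ) (by abel) δ hδ
          have hsim := B.coord_simple hγ δ hδ
          have h3 := hd δ hδ
          rw [hb0]
          by_cases heq : δ = γ
          · rw [if_pos heq] at hsim
            subst heq
            omega
          · rw [if_neg heq] at hsim
            omega
      exact ⟨_, hrig, Or.inl ⟨haff, hstep⟩⟩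
  · -- Case (D): bot positive, top negative
    have hb0 : bot.2 = 0 := by rw [hbe, B.eps_of_pos hbpos]
    have ht1 : top.2 = 1 := by rw [hte, B.eps_of_neg htpos]
    have hcoD : ∀ δ ∈ B.Δ, B.coord bot.1 δ ≤ B.coord top.1 δ + B.coord B.highest δ := by
      intro δ hδ
      have h3 := hco δ hδ
      rw [hb0, ht1] at h3
      omega
    by_cases hO1 : top.1 + B.highest ∈ B.Φ
    · -- peel θ : mid = (top.1 + θ, 0)
      have hpos2 : B.IsPos (top.1 + B.highest) := by
        by_contra hnp
        have hcoO := B.coord_nonpos hO1 hnp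
        have hnegtop : -top.1 ∈ B.Φ := B.neg_mem _ htΦ
        have hkey : ∀ δ ∈ B.Δ, B.coord (-top.1) δ = B.coord B.highest δ := by
          intro δ hδ
          have hadd := B.coord_add (Or.inl htΦ) (Or.inl hθΦ) (Or.inl hO1) rfl δ hδ
          have h4 := hcoO δ hδ
          have h5 := B.highest_is_highest _ hnegtop δ hδ
          have h6 := B.coord_neg (Or.inl htΦ) δ hδ
          omega
        have h7 := B.coord_inj (Or.inl hnegtop) (Or.inl hθΦ) hkey
        have h8 : top.1 + B.highest = 0 := by rw [← h7]; abel
        rw [h8] at hO1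
        exact B.zero_not_mem hO1
      have hrig : B.Rig (top.1 + B.highest, (0:ℤ)) :=
        Or.inl ⟨hO1, (B.eps_of_pos hpos2).symm⟩
      have haff : B.affLe bot (top.1 + B.highest, (0:ℤ)) := by
        constructor
        · simp only; omega
        · intro δ hδ
          simp only
          have hadd := B.coord_add (Or.inl htΦ) (Or.inl hθΦ) (Or.inl hO1) rfl δ hδ
          have h3 := hcoD δ hδ
          rw [hb0]
          omega
      have hstep : B.StepRel (top.1 + B.highest, (0:ℤ)) top := by
        right
        exact ⟨by simp, by simp only; omega⟩
      exact ⟨_, hrig, Or.inl ⟨haff, hstep⟩⟩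
    by_cases hO2 : bot.1 - B.highest ∈ B.Φ
    · -- raise θ : mid = (bot.1 - θ, 1)
      have hmneg : ¬ B.IsPos (bot.1 - B.highest) := by
        intro hp
        apply B.ne_zero_coord hO2
        intro δ hδ
        have hadd := B.coord_add (Or.inl hO2) (Or.inl hθΦ) (Or.inl hbΦ) (by abel) δ hδ
        have h4 := hp δ hδ
        have h5 := B.highest_is_highest _ hbΦ δ hδ
        omega
      have hrig : B.Rig (bot.1 - B.highest, (1:ℤ)) :=
        Or.inl ⟨hO2, (B.eps_of_neg hmneg).symm⟩
      have hstep : B.StepRel bot (bot.1 - B.highest, (1:ℤ)) := by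
        right
        exact ⟨rfl, by simp only; omega⟩
      have haff : B.affLe (bot.1 - B.highest, (1:ℤ)) top := by
        constructor
        · simp only; omega
        · intro δ hδ
          simp only
          have hadd := B.coord_add (Or.inl hO2) (Or.inl hθΦ) (Or.inl hbΦ) (by abel) δ hδ
          have h3 := hcoD δ hδ
          rw [ht1]
          omega
      exact ⟨_, hrig, Or.inr ⟨hO2, (B.eps_of_neg hmneg).symm, hstep, haff⟩⟩
    by_cases hO3 : ∃ γ ∈ B.Δ,
        (1 ≤ B.coord B.highest γ + B.coord top.1 γ - B.coord bot.1 γ) ∧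
        (top.1 - γ ∈ B.Φ ∨ bot.1 + γ ∈ B.Φ)
    · obtain ⟨γ, hγ, hd1, hor⟩ := hO3
      have hγΦ := B.base_sub hγ
      rcases hor with hmem | hmem
      · -- peel γ : mid = (top.1 - γ, 1)
        have hmneg : ¬ B.IsPos (top.1 - γ) := by
          apply B.neg_of_nonpos hmem
          intro δ hδ
          have hadd := B.coord_add (Or.inl hmem) (Or.inl hγΦ) (Or.inl htΦ) (by abel) δ hδ
          have hsim := B.coord_simple hγ δ hδ
          have h4 := B.coord_nonpos htΦ htpos δ hδ
          by_cases heq : δ = γ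
          · rw [if_pos heq] at hsim; omega
          · rw [if_neg heq] at hsim; omega
        have hrig : B.Rig (top.1 - γ, (1:ℤ)) := Or.inl ⟨hmem, (B.eps_of_neg hmneg).symm⟩
        have hstep : B.StepRel (top.1 - γ, (1:ℤ)) top :=
          Or.inl ⟨γ, hγ, by simp, by simp only; omega⟩
        have haff : B.affLe bot (top.1 - γ, (1:ℤ)) := by
          constructor
          · simp only; omega
          · intro δ hδ
            simp only
            have hadd := B.coord_add (Or.inl hmem) (Or.inl hγΦ) (Or.inl htΦ) (by abel) δ hδ
            have hsim := B.coord_simple hγ δ hδ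
            have h3 := hcoD δ hδ
            rw [hb0]
            by_cases heq : δ = γ
            · rw [if_pos heq] at hsim
              subst heq
              omega
            · rw [if_neg heq] at hsim
              omega
        exact ⟨_, hrig, Or.inl ⟨haff, hstep⟩⟩
      · -- raise γ : mid = (bot.1 + γ, 0)
        have hmpos : B.IsPos (bot.1 + γ) := by
          intro δ hδ
          have hadd := B.coord_add (Or.inl hbΦ) (Or.inl hγΦ) (Or.inl hmem) rfl δ hδ
          have hsim := B.coord_simple hγ δ hδ
          have h4 := hbpos δ hδ
          rw [hadd, hsim]
          split <;> omega
        have hrig : B.Rig (bot.1 + γ, (0:ℤ)) := Or.inl ⟨hmem, (B.eps_of_pos hmpos).symm⟩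
        have hstep : B.StepRel bot (bot.1 + γ, (0:ℤ)) :=
          Or.inl ⟨γ, hγ, rfl, by simp only; omega⟩
        have haff : B.affLe (bot.1 + γ, (0:ℤ)) top := by
          constructor
          · simp only; omega
          · intro δ hδ
            simp only
            have hadd := B.coord_add (Or.inl hbΦ) (Or.inl hγΦ) (Or.inl hmem) rfl δ hδ
            have hsim := B.coord_simple hγ δ hδ
            have h3 := hcoD δ hδ
            rw [hadd, hsim, ht1]
            by_cases heq : δ = γ
            · rw [if_pos heq]
              subst heq
              omega
            · rw [if_neg heq]
              omega
        exact ⟨_, hrig, Or.inr ⟨hmem, (B.eps_of_pos hmpos).symm, hstep, haff⟩⟩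
    · -- all options blocked: contradiction
      exfalso
      push_neg at hO3
      have hxΦ : -top.1 ∈ B.Φ := B.neg_mem _ htΦ
      have hxpos : B.IsPos (-top.1) := by
        intro δ hδ
        have h4 := B.coord_nonpos htΦ htpos δ hδ
        have h5 := B.coord_neg (Or.inl htΦ) δ hδ
        omega
      -- θ-inner products vanish
      have hxθ : ⟪B.highest, -top.1⟫ = 0 := by
        have hge := B.inner_theta_nonneg (Or.inl hxΦ) hxpos
        rcases hge.lt_or_eq with hlt | heq
        · exfalso
          have hneθ : -top.1 ≠ B.highest := by
            intro h
            apply B.ne_zero_coord hbΦ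
            intro δ hδ
            have h4 := hcoD δ hδ
            have h6 := B.coord_neg (Or.inl htΦ) δ hδ
            have h7 : B.coord (-top.1) δ = B.coord B.highest δ := by rw [h]
            have h8 := hbpos δ hδ
            omega
          have hlt2 : 0 < ⟪-top.1, B.highest⟫ := by
            rwa [real_inner_comm] at hlt
          rcases B.sub_mem' hxΦ hθΦ hlt2 with h0 | hmem
          · exact hneθ (sub_eq_zero.mp h0)
          · apply hO1
            have h9 := B.neg_mem _ hmem
            rwa [show -(-top.1 - B.highest) = top.1 + B.highest by abel] at h9
        · exact heq.symm
      have hbθ : ⟪B.highest, bot.1⟫ = 0 := by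
        have hge := B.inner_theta_nonneg (Or.inl hbΦ) hbpos
        rcases hge.lt_or_eq with hlt | heq
        · exfalso
          have hneθ : bot.1 ≠ B.highest := by
            intro h
            apply B.ne_zero_coord htΦ
            intro δ hδ
            have h4 := hcoD δ hδ
            have h7 : B.coord bot.1 δ = B.coord B.highest δ := by rw [h]
            have h8 := B.coord_nonpos htΦ htpos δ hδ
            omega
          have hlt2 : 0 < ⟪bot.1, B.highest⟫ := by
            rwa [real_inner_comm] at hlt
          rcases B.sub_mem' hbΦ hθΦ hlt2 with h0 | hmem
          · exact hneθ (sub_eq_zero.mp h0)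
          · exact hO2 hmem
        · exact heq.symm
      -- blocked inner products
      have hkey : ∀ γ ∈ B.Δ,
          1 ≤ B.coord B.highest γ + B.coord top.1 γ - B.coord bot.1 γ →
          0 ≤ ⟪γ, -top.1⟫ ∧ 0 ≤ ⟪γ, bot.1⟫ := by
        intro γ hγ hd1
        obtain ⟨ht3, hb3⟩ := hO3 γ hγ hd1
        have hγΦ := B.base_sub hγ
        constructor
        · by_contra hlt
          push_neg at hlt
          have hlt2 : ⟪-top.1, γ⟫ < 0 := by
            rw [real_inner_comm]
            exact hlt
          rcases B.add_mem' hxΦ hγΦ hlt2 with h0 | hmem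
          · have h3 : -top.1 = -γ := eq_neg_of_add_eq_zero_left h0
            have h4 : top.1 = γ := by rw [← neg_neg top.1, h3, neg_neg]
            exact htpos (h4 ▸ B.isPos_simple hγ)
          · apply ht3
            have h9 := B.neg_mem _ hmem
            rwa [show -(-top.1 + γ) = top.1 - γ by abel] at h9
        · by_contra hlt
          push_neg at hlt
          have hlt2 : ⟪bot.1, γ⟫ < 0 := by
            rw [real_inner_comm]
            exact hlt
          rcases B.add_mem' hbΦ hγΦ hlt2 with h0 | hmem
          · have h3 : bot.1 = -γ := eq_neg_of_add_eq_zero_left h0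
            have h4 := hbpos γ hγ
            have h5 := B.coord_neg (Or.inl hγΦ) γ hγ
            have h6 := B.coord_simple hγ γ hγ
            rw [if_pos rfl] at h6
            rw [h3] at h4
            omega
          · exact hb3 hmem
      -- sum the inequalities
      have hdnn : ∀ δ ∈ B.Δ, 0 ≤ B.coord B.highest δ + B.coord top.1 δ - B.coord bot.1 δ := by
        intro δ hδ
        have := hcoD δ hδ
        omega
      have hvdef := B.theta_diff_sum (Or.inl hbΦ) (Or.inl htΦ)
      have hvx : 0 ≤ ⟪B.highest + top.1 - bot.1, -top.1⟫ := by
        rw [hvdef, sum_inner]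
        apply Finset.sum_nonneg
        intro γ hγ
        rw [real_inner_smul_left]
        rcases lt_or_ge (B.coord B.highest γ + B.coord top.1 γ - B.coord bot.1 γ) 1 with h1 | h1
        · have h2 : B.coord B.highest γ + B.coord top.1 γ - B.coord bot.1 γ = 0 := by
            have := hdnn γ hγ; omega
          rw [h2]; norm_num
        · have h2 := (hkey γ hγ h1).1
          apply mul_nonneg _ h2
          have := hdnn γ hγ
          exact_mod_cast this
      have hvb : 0 ≤ ⟪B.highest + top.1 - bot.1, bot.1⟫ := by
        rw [hvdef, sum_inner]
        apply Finset.sum_nonneg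
        intro γ hγ
        rw [real_inner_smul_left]
        rcases lt_or_ge (B.coord B.highest γ + B.coord top.1 γ - B.coord bot.1 γ) 1 with h1 | h1
        · have h2 : B.coord B.highest γ + B.coord top.1 γ - B.coord bot.1 γ = 0 := by
            have := hdnn γ hγ; omega
          rw [h2]; norm_num
        · have h2 := (hkey γ hγ h1).2
          apply mul_nonneg _ h2
          have := hdnn γ hγ
          exact_mod_cast this
      -- expand
      have e1 : ⟪B.highest + top.1 - bot.1, -top.1⟫
          = ⟪B.highest, -top.1⟫ - ⟪top.1, top.1⟫ + ⟪bot.1, top.1⟫ := by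
        simp only [inner_sub_left, inner_add_left, inner_neg_right]
        ring
      have e2 : ⟪B.highest + top.1 - bot.1, bot.1⟫
          = ⟪B.highest, bot.1⟫ + ⟪top.1, bot.1⟫ - ⟪bot.1, bot.1⟫ := by
        simp only [inner_sub_left, inner_add_left]
      have hcomm2 : ⟪top.1, bot.1⟫ = ⟪bot.1, top.1⟫ := real_inner_comm bot.1 top.1
      have hfin : ⟪bot.1 - top.1, bot.1 - top.1⟫ ≤ 0 := by
        have hx1 : ⟪top.1, top.1⟫ ≤ ⟪bot.1, top.1⟫ := by
          rw [e1, hxθ] at hvx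
          linarith
        have hx2 : ⟪bot.1, bot.1⟫ ≤ ⟪bot.1, top.1⟫ := by
          rw [e2, hbθ, hcomm2] at hvb
          linarith
        have hexp2 : ⟪bot.1 - top.1, bot.1 - top.1⟫
            = ⟪bot.1, bot.1⟫ - 2 * ⟪bot.1, top.1⟫ + ⟪top.1, top.1⟫ := by
          simp only [inner_sub_left, inner_sub_right]
          rw [hcomm2]
          ring
        rw [hexp2]
        linarith
      have hzero : bot.1 - top.1 = 0 := real_inner_self_nonpos.mp hfin
      have : bot.1 = top.1 := sub_eq_zero.mp hzero
      exact htpos (this ▸ hbpos)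
  · -- impossible: bot negative, top positive
    exfalso
    have hb1 : bot.2 = 1 := by rw [hbe, B.eps_of_neg hbpos]
    have ht0' : top.2 = 0 := by rw [hte, B.eps_of_pos htpos]
    omega
  · -- Case (C): both negative
    have hb1 : bot.2 = 1 := by rw [hbe, B.eps_of_neg hbpos]
    have ht1 : top.2 = 1 := by rw [hte, B.eps_of_neg htpos]
    have hd : ∀ δ ∈ B.Δ, 0 ≤ B.coord top.1 δ - B.coord bot.1 δ := by
      intro δ hδ
      have h3 := hco δ hδ
      rw [hb1, ht1] at h3
      omega
    have hvne : top.1 - bot.1 ≠ 0 := by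
      intro h
      exact hne (Prod.ext (sub_eq_zero.mp h).symm (by omega))
    obtain ⟨γ, hγ, hd1, hvγ⟩ := B.exists_good
      (d := fun δ => B.coord top.1 δ - B.coord bot.1 δ)
      hd (B.diff_sum (Or.inl hbΦ) (Or.inl htΦ)) hvne
    have hγΦ := B.base_sub hγ
    rw [inner_sub_left] at hvγ
    by_cases hbγ : ⟪bot.1, γ⟫ < 0
    · -- raise : mid = (bot.1 + γ, 1)
      rcases B.add_mem' hbΦ hγΦ hbγ with h0 | hmem
      · exfalso
        have h3 : bot.1 = -γ := eq_neg_of_add_eq_zero_left h0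
        have hbco : ∀ δ ∈ B.Δ, B.coord bot.1 δ = if δ = γ then -1 else 0 := by
          intro δ hδ
          have h4 := B.coord_neg (Or.inl hγΦ) δ hδ
          have h5 := B.coord_simple hγ δ hδ
          rw [h3, h4, h5]
          by_cases heq : δ = γ
          · rw [if_pos heq, if_pos heq]
          · rw [if_neg heq, if_neg heq]
            norm_num
        have hγbound : B.coord top.1 γ = 0 ∨ B.coord top.1 γ = -1 := by
          have h4 := hd γ hγ
          have h5 := hbco γ hγ
          rw [if_pos rfl] at h5
          have h6 := B.coord_nonpos htΦ htpos γ hγ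
          omega
        rcases hγbound with hcase | hcase
        · apply B.ne_zero_coord htΦ
          intro δ hδ
          by_cases heq : δ = γ
          · rw [heq]; exact hcase
          · have h4 := hd δ hδ
            have h5 := hbco δ hδ
            rw [if_neg heq] at h5
            have h6 := B.coord_nonpos htΦ htpos δ hδ
            omega
        · apply hne
          have hteq : top.1 = bot.1 := by
            apply B.coord_inj (Or.inl htΦ) (Or.inl hbΦ)
            intro δ hδ
            have h5 := hbco δ hδ
            by_cases heq : δ = γ
            · rw [if_pos heq] at h5
              rw [h5, heq]; exact hcase
            · rw [if_neg heq] at h5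
              have h4 := hd δ hδ
              have h6 := B.coord_nonpos htΦ htpos δ hδ
              omega
          exact Prod.ext hteq.symm (by omega)
      have hmneg : ¬ B.IsPos (bot.1 + γ) := by
        intro hp
        have hoff : ∀ δ ∈ B.Δ, δ ≠ γ → B.coord (bot.1 + γ) δ = 0 := by
          intro δ hδ hne2
          have hadd := B.coord_add (Or.inl hbΦ) (Or.inl hγΦ) (Or.inl hmem) rfl δ hδ
          have hsim := B.coord_simple hγ δ hδ
          rw [if_neg hne2] at hsim
          have h6 := B.coord_nonpos hbΦ hbpos δ hδ
          have h7 := hp δ hδ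
          omega
        have hρeq : bot.1 + γ = ((B.coord (bot.1 + γ) γ : ℤ) : ℝ) • γ := by
          have hs := B.coord_spec' (Or.inl hmem)
          rw [Finset.sum_eq_single_of_mem γ hγ
            (fun δ hδ hne2 => by rw [hoff δ hδ hne2]; simp)] at hs
          exact hs
        rcases B.reduced γ hγΦ _ (hρeq ▸ hmem) with h | h
        · have hc1 : B.coord (bot.1 + γ) γ = 1 := by exact_mod_cast h
          have h4 : bot.1 + γ = γ := by rw [hρeq, hc1]; norm_num
          have h5 : bot.1 = 0 := add_eq_right.mp h4
          exact B.zero_not_mem (h5 ▸ hbΦ)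
        · have hc1 : B.coord (bot.1 + γ) γ = -1 := by exact_mod_cast h
          have h5 := hp γ hγ
          omega
      have hrig : B.Rig (bot.1 + γ, (1:ℤ)) := Or.inl ⟨hmem, (B.eps_of_neg hmneg).symm⟩
      have hstep : B.StepRel bot (bot.1 + γ, (1:ℤ)) :=
        Or.inl ⟨γ, hγ, rfl, by simp only; omega⟩
      have haff : B.affLe (bot.1 + γ, (1:ℤ)) top := by
        constructor
        · simp only; omega
        · intro δ hδ
          simp only
          have hadd := B.coord_add (Or.inl hbΦ) (Or.inl hγΦ) (Or.inl hmem) rfl δ hδ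
          have hsim := B.coord_simple hγ δ hδ
          have h3 := hd δ hδ
          rw [hadd, hsim, ht1]
          by_cases heq : δ = γ
          · rw [if_pos heq]
            subst heq
            omega
          · rw [if_neg heq]
            omega
      exact ⟨_, hrig, Or.inr ⟨hmem, (B.eps_of_neg hmneg).symm, hstep, haff⟩⟩
    · -- peel : mid = (top.1 - γ, 1)
      push_neg at hbγ
      have htγ : 0 < ⟪top.1, γ⟫ := by linarith
      rcases B.sub_mem' htΦ hγΦ htγ with h0 | hmem
      · exact absurd ((sub_eq_zero.mp h0) ▸ B.isPos_simple hγ) htpos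
      have hmneg : ¬ B.IsPos (top.1 - γ) := by
        apply B.neg_of_nonpos hmem
        intro δ hδ
        have hadd := B.coord_add (Or.inl hmem) (Or.inl hγΦ) (Or.inl htΦ) (by abel) δ hδ
        have hsim := B.coord_simple hγ δ hδ
        have h4 := B.coord_nonpos htΦ htpos δ hδ
        by_cases heq : δ = γ
        · rw [if_pos heq] at hsim; omega
        · rw [if_neg heq] at hsim; omega
      have hrig : B.Rig (top.1 - γ, (1:ℤ)) := Or.inl ⟨hmem, (B.eps_of_neg hmneg).symm⟩
      have hstep : B.StepRel (top.1 - γ, (1:ℤ)) top :=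
        Or.inl ⟨γ, hγ, by simp, by simp only; omega⟩
      have haff : B.affLe bot (top.1 - γ, (1:ℤ)) := by
        constructor
        · simp only; omega
        · intro δ hδ
          simp only
          have hadd := B.coord_add (Or.inl hmem) (Or.inl hγΦ) (Or.inl htΦ) (by abel) δ hδ
          have hsim := B.coord_simple hγ δ hδ
          have h3 := hd δ hδ
          rw [hb1]
          by_cases heq : δ = γ
          · rw [if_pos heq] at hsim
            subst heq
            omega
          · rw [if_neg heq] at hsim
            omega
      exact ⟨_, hrig, Or.inl ⟨haff, hstep⟩⟩

end BasedRootSystem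

namespace BasedRootSystem

variable {V : Type*} [NormedAddCommGroup V] [InnerProductSpace ℝ V] (B : BasedRootSystem V)

open scoped Classical

set_option linter.unusedSectionVars false

/-- Total affine height. -/
def Psi (p : V × ℤ) : ℤ :=
  p.2 + ∑ γ ∈ B.Δ, (B.coord p.1 γ + p.2 * B.coord B.highest γ)

lemma psi_step {σ τ : V × ℤ} (hσ : B.Mem' σ.1) (hτ : B.Mem' τ.1) (h : B.StepRel σ τ) :
    B.Psi τ = B.Psi σ + 1 := by
  rcases h with ⟨γ, hγ, h1, h2⟩ | ⟨h1, h2⟩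
  · have hγΦ := B.base_sub hγ
    have hco : ∀ δ ∈ B.Δ, B.coord τ.1 δ = B.coord σ.1 δ + (if δ = γ then 1 else 0) := by
      intro δ hδ
      have hadd := B.coord_add hσ (Or.inl hγΦ) hτ h1 δ hδ
      have hsim := B.coord_simple hγ δ hδ
      omega
    unfold Psi
    rw [h2]
    have hs : ∑ δ ∈ B.Δ, (B.coord τ.1 δ + σ.2 * B.coord B.highest δ)
        = ∑ δ ∈ B.Δ, ((B.coord σ.1 δ + σ.2 * B.coord B.highest δ) + (if δ = γ then 1 else 0)) := by
      apply Finset.sum_congr rfl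
      intro δ hδ
      have := hco δ hδ
      omega
    rw [hs, Finset.sum_add_distrib, Finset.sum_ite_eq' B.Δ γ (fun _ => (1:ℤ)), if_pos hγ]
    ring
  · have hco : ∀ δ ∈ B.Δ, B.coord τ.1 δ = B.coord σ.1 δ - B.coord B.highest δ := by
      intro δ hδ
      have hadd := B.coord_add hτ (Or.inl B.highest_mem) hσ (by rw [h1]; abel) δ hδ
      omega
    unfold Psi
    rw [h2]
    have hs : ∑ δ ∈ B.Δ, (B.coord τ.1 δ + (σ.2 + 1) * B.coord B.highest δ)
        = ∑ δ ∈ B.Δ, (B.coord σ.1 δ + σ.2 * B.coord B.highest δ) := by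
      apply Finset.sum_congr rfl
      intro δ hδ
      have := hco δ hδ
      nlinarith [this]
    rw [hs]
    ring

lemma eq_of_psi {bot top : V × ℤ} (hb : B.Mem' bot.1) (ht : B.Mem' top.1)
    (hle : B.affLe bot top) (h : B.Psi top - B.Psi bot = 0) : bot = top := by
  obtain ⟨hlv, hco⟩ := hle
  have hsum : B.Psi top - B.Psi bot = (top.2 - bot.2) +
      ∑ γ ∈ B.Δ, ((B.coord top.1 γ + top.2 * B.coord B.highest γ)
        - (B.coord bot.1 γ + bot.2 * B.coord B.highest γ)) := by
    unfold Psi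
    rw [Finset.sum_sub_distrib]
    ring
  have hterm : ∀ γ ∈ B.Δ, 0 ≤ (B.coord top.1 γ + top.2 * B.coord B.highest γ)
      - (B.coord bot.1 γ + bot.2 * B.coord B.highest γ) := by
    intro γ hγ
    have := hco γ hγ
    omega
  have hsnn := Finset.sum_nonneg hterm
  rw [hsum] at h
  have hS0 : ∑ γ ∈ B.Δ, ((B.coord top.1 γ + top.2 * B.coord B.highest γ)
      - (B.coord bot.1 γ + bot.2 * B.coord B.highest γ)) = 0 := by linarith
  have hlveq : top.2 = bot.2 := by linarith
  have heach := (Finset.sum_eq_zero_iff_of_nonneg hterm).mp hS0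
  have hcoeq : ∀ γ ∈ B.Δ, B.coord bot.1 γ = B.coord top.1 γ := by
    intro γ hγ
    have h3 := heach γ hγ
    rw [hlveq] at h3
    omega
  exact Prod.ext (B.coord_inj hb ht hcoeq) hlveq.symm

lemma sum_update {M : Type*} [AddCommGroup M] {t : ℕ} (f : Fin t → M) (i0 : Fin t) (w : M) :
    ∑ i, Function.update f i0 w i = ∑ i, f i - f i0 + w := by
  classical
  rw [Finset.sum_update_of_mem (Finset.mem_univ i0)]
  rw [← Finset.sum_erase_add Finset.univ f (Finset.mem_univ i0), Finset.erase_eq]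
  abel

lemma sum_update_fst {t : ℕ} (q : Fin t → V × ℤ) (i0 : Fin t) (v : V × ℤ) :
    ∑ i, (Function.update q i0 v i).1 = (∑ i, (q i).1) - (q i0).1 + v.1 := by
  have hfun : (fun i => (Function.update q i0 v i).1)
      = Function.update (fun i => (q i).1) i0 v.1 := by
    funext i
    by_cases h : i = i0
    · subst h; simp
    · simp [Function.update_of_ne h]
  calc ∑ i, (Function.update q i0 v i).1
      = ∑ i, Function.update (fun j => (q j).1) i0 v.1 i := by rw [hfun]
    _ = (∑ i, (q i).1) - (q i0).1 + v.1 := sum_update _ i0 v.1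

lemma sum_update_snd {t : ℕ} (q : Fin t → V × ℤ) (i0 : Fin t) (v : V × ℤ) :
    ∑ i, (Function.update q i0 v i).2 = (∑ i, (q i).2) - (q i0).2 + v.2 := by
  have hfun : (fun i => (Function.update q i0 v i).2)
      = Function.update (fun i => (q i).2) i0 v.2 := by
    funext i
    by_cases h : i = i0
    · subst h; simp
    · simp [Function.update_of_ne h]
  calc ∑ i, (Function.update q i0 v i).2
      = ∑ i, Function.update (fun j => (q j).2) i0 v.2 i := by rw [hfun]
    _ = (∑ i, (q i).2) - (q i0).2 + v.2 := sum_update _ i0 v.2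

lemma affLe_step_gamma {γ : V} (hγ : γ ∈ B.Δ) {σ : V × ℤ} (hσ : B.Mem' σ.1)
    (hmem : B.Mem' (σ.1 + γ)) : B.affLe σ (σ.1 + γ, σ.2) := by
  constructor
  · exact le_refl _
  · intro δ hδ
    simp only
    have hadd := B.coord_add hσ (Or.inl (B.base_sub hγ)) hmem rfl δ hδ
    have hsim := B.coord_simple hγ δ hδ
    rw [hadd, hsim]
    split <;> omega

lemma affLe_step_theta {σ : V × ℤ} (hσ : B.Mem' σ.1)
    (hmem : B.Mem' (σ.1 - B.highest)) : B.affLe σ (σ.1 - B.highest, σ.2 + 1) := by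
  constructor
  · simp only; omega
  · intro δ hδ
    simp only
    have hadd := B.coord_add hmem (Or.inl B.highest_mem) hσ (by abel) δ hδ
    nlinarith [hadd]

theorem engine : ∀ (n : ℕ) (bot top : V × ℤ), bot.1 ∈ B.Φ → bot.2 = B.eps bot.1 →
    B.Rig top → B.affLe bot top → B.Psi top - B.Psi bot = n →
    ∀ {t : ℕ} (p : Fin t → V × ℤ), (∀ i, B.Rig (p i)) → (∑ i, (p i).1) = bot.1 →
    ∃ q : Fin t → V × ℤ, (∀ i, B.Rig (q i)) ∧ (∀ i, B.affLe (p i) (q i)) ∧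
      (∑ i, (q i).1) = top.1 ∧ (∑ i, (q i).2) = (∑ i, (p i).2) + (top.2 - bot.2) := by
  intro n
  induction n using Nat.strong_induction_on with
  | _ n IH =>
  intro bot top hbΦ hbe ht hle hgap t p hp hsum
  by_cases heq : bot = top
  · refine ⟨p, hp, fun i => B.affLe_refl _, by rw [hsum, heq], by rw [heq]; omega⟩
  have hn1 : 1 ≤ n := by
    by_contra h0
    have hn0 : n = 0 := by omega
    apply heq
    apply B.eq_of_psi (Or.inl hbΦ) (B.rig_mem' ht) hle
    omega
  obtain ⟨mid, hmidrig, hcase⟩ := B.exists_step hbΦ hbe ht hle heq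
  rcases hcase with ⟨haff, hstep⟩ | ⟨hmidΦ, hmide, hstep, haff⟩
  · -- peel at the top
    have hpsi := B.psi_step (B.rig_mem' hmidrig) (B.rig_mem' ht) hstep
    have hgap2 : B.Psi mid - B.Psi bot = ((n - 1 : ℕ) : ℤ) := by
      push_cast [hn1]
      omega
    obtain ⟨q', hq'rig, hq'le, hq'sum, hq'lvl⟩ :=
      IH (n-1) (by omega) bot mid hbΦ hbe hmidrig haff hgap2 p hp hsum
    rcases hstep with ⟨γ, hγ, h1, h2⟩ | ⟨h1, h2⟩
    · obtain ⟨i0, hi0⟩ := B.add_gamma hγ hmidrig ht h1 h2 q' hq'rig hq'sum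
      refine ⟨Function.update q' i0 ((q' i0).1 + γ, (q' i0).2), ?_, ?_, ?_, ?_⟩
      · intro i
        by_cases h : i = i0
        · subst h; rw [Function.update_self]; exact hi0
        · rw [Function.update_of_ne h]; exact hq'rig i
      · intro i
        by_cases h : i = i0
        · subst h
          rw [Function.update_self]
          exact B.affLe_trans (hq'le i)
            (B.affLe_step_gamma hγ (B.rig_mem' (hq'rig i)) (B.rig_mem' hi0))
        · rw [Function.update_of_ne h]; exact hq'le i
      · rw [sum_update_fst, hq'sum, h1]
        dsimp only
        abel
      · rw [sum_update_snd, hq'lvl]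
        omega
    · obtain ⟨i0, hi0⟩ := B.add_theta hmidrig ht h1 h2 q' hq'rig hq'sum
      refine ⟨Function.update q' i0 ((q' i0).1 - B.highest, (q' i0).2 + 1), ?_, ?_, ?_, ?_⟩
      · intro i
        by_cases h : i = i0
        · subst h; rw [Function.update_self]; exact hi0
        · rw [Function.update_of_ne h]; exact hq'rig i
      · intro i
        by_cases h : i = i0
        · subst h
          rw [Function.update_self]
          exact B.affLe_trans (hq'le i)
            (B.affLe_step_theta (B.rig_mem' (hq'rig i)) (B.rig_mem' hi0))
        · rw [Function.update_of_ne h]; exact hq'le i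
      · rw [sum_update_fst, hq'sum, h1]
        dsimp only
        abel
      · rw [sum_update_snd, hq'lvl]
        omega
  · -- raise at the bottom
    have hpsi := B.psi_step (Or.inl hbΦ) (B.rig_mem' hmidrig) hstep
    have hgap2 : B.Psi top - B.Psi mid = ((n - 1 : ℕ) : ℤ) := by
      push_cast [hn1]
      omega
    rcases hstep with ⟨γ, hγ, h1, h2⟩ | ⟨h1, h2⟩
    · obtain ⟨i0, hi0⟩ := B.add_gamma hγ (Or.inl ⟨hbΦ, hbe⟩) hmidrig h1 h2 p hp hsum
      have hp' : ∀ i, B.Rig (Function.update p i0 ((p i0).1 + γ, (p i0).2) i) := by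
        intro i
        by_cases h : i = i0
        · subst h; rw [Function.update_self]; exact hi0
        · rw [Function.update_of_ne h]; exact hp i
      have hsum' : (∑ i, (Function.update p i0 ((p i0).1 + γ, (p i0).2) i).1) = mid.1 := by
        rw [sum_update_fst, hsum, h1]
        dsimp only
        abel
      obtain ⟨q, hqrig, hqle, hqsum, hqlvl⟩ :=
        IH (n-1) (by omega) mid top hmidΦ hmide ht haff hgap2
          (Function.update p i0 ((p i0).1 + γ, (p i0).2)) hp' hsum'
      refine ⟨q, hqrig, ?_, hqsum, ?_⟩
      · intro i
        by_cases h : i = i0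
        · subst h
          refine B.affLe_trans ?_ (by have h5 := hqle i; rwa [Function.update_self] at h5)
          exact B.affLe_step_gamma hγ (B.rig_mem' (hp i)) (B.rig_mem' hi0)
        · have h5 := hqle i
          rwa [Function.update_of_ne h] at h5
      · rw [hqlvl, sum_update_snd]
        omega
    · obtain ⟨i0, hi0⟩ := B.add_theta (Or.inl ⟨hbΦ, hbe⟩) hmidrig h1 h2 p hp hsum
      have hp' : ∀ i, B.Rig (Function.update p i0 ((p i0).1 - B.highest, (p i0).2 + 1) i) := by
        intro i
        by_cases h : i = i0
        · subst h; rw [Function.update_self]; exact hi0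
        · rw [Function.update_of_ne h]; exact hp i
      have hsum' : (∑ i, (Function.update p i0 ((p i0).1 - B.highest, (p i0).2 + 1) i).1) = mid.1 := by
        rw [sum_update_fst, hsum, h1]
        dsimp only
        abel
      obtain ⟨q, hqrig, hqle, hqsum, hqlvl⟩ :=
        IH (n-1) (by omega) mid top hmidΦ hmide ht haff hgap2
          (Function.update p i0 ((p i0).1 - B.highest, (p i0).2 + 1)) hp' hsum'
      refine ⟨q, hqrig, ?_, hqsum, ?_⟩
      · intro i
        by_cases h : i = i0
        · subst h
          refine B.affLe_trans ?_ (by have h5 := hqle i; rwa [Function.update_self] at h5)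
          exact B.affLe_step_theta (B.rig_mem' (hp i)) (B.rig_mem' hi0)
        · have h5 := hqle i
          rwa [Function.update_of_ne h] at h5
      · rw [hqlvl, sum_update_snd]
        omega

end BasedRootSystem

namespace BasedRootSystem

variable {V : Type*} [NormedAddCommGroup V] [InnerProductSpace ℝ V] (B : BasedRootSystem V)

lemma psi_mono {p q : V × ℤ} (h : B.affLe p q) : B.Psi p ≤ B.Psi q := by
  obtain ⟨hlv, hco⟩ := h
  unfold Psi
  have hs := Finset.sum_le_sum (fun γ hγ => hco γ hγ)
  linarith

end BasedRootSystem

/-- if positive affine roots `(α_i, c_i + ε_{α_i})` sum to the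
positive affine root `(α, c + ε_α)`, and `(β, c' + ε_β)` (with `β ∈ Φ ∪ {0}`,
`c' ∈ {c, c+1}`) satisfies `(α, c+ε_α) ≤ (β, c'+ε_β) ≤ (0, c+1)`, then the
`(α_i, c_i + ε_{α_i})` can be enlarged, entry by entry, to extended positive
affine roots `(β_i, c'_i + ε_{β_i})` summing to `(β, c'+ε_β)` with
`(α_i, c_i+ε_{α_i}) ≤ (β_i, c'_i+ε_{β_i}) ≤ (0, c_i + 1)` for every `i`. -/
theorem stmt6 {V : Type*} [NormedAddCommGroup V] [InnerProductSpace ℝ V]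
    (B : BasedRootSystem V) (t : ℕ) (a : Fin t → V) (c : Fin t → ℤ)
    (ha : ∀ i, a i ∈ B.Φ) (hc : ∀ i, 0 ≤ c i)
    (α : V) (hα : α ∈ B.Φ) (cc : ℤ) (hcc : 0 ≤ cc)
    (hsum1 : ∑ i, a i = α)
    (hsum2 : ∑ i, (c i + B.eps (a i)) = cc + B.eps α)
    (β : V) (hβ : β ∈ (B.Φ : Set V) ∪ {0}) (c' : ℤ) (hc' : c' = cc ∨ c' = cc + 1)
    (h1 : B.affLe (α, cc + B.eps α) (β, c' + B.eps β))
    (h2 : B.affLe (β, c' + B.eps β) (0, cc + 1)) :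
    ∃ (b : Fin t → V) (d : Fin t → ℤ),
      (∀ i, b i ∈ (B.Φ : Set V) ∪ {0}) ∧
      (∀ i, b i ∈ B.Φ → 0 ≤ d i) ∧
      (∀ i, b i = 0 → 1 ≤ d i + B.eps (b i)) ∧
      (∑ i, b i = β) ∧
      (∑ i, (d i + B.eps (b i)) = c' + B.eps β) ∧
      ∀ i, B.affLe (a i, c i + B.eps (a i)) (b i, d i + B.eps (b i)) ∧
           B.affLe (b i, d i + B.eps (b i)) (0, c i + 1) := by
  classical
  -- the bottom and top rigid affine roots
  have hβcase : β ∈ B.Φ ∨ β = 0 := by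
    rcases hβ with h | h
    · exact Or.inl (Finset.mem_coe.mp h)
    · exact Or.inr (Set.mem_singleton_iff.mp h)
  have htoprig : B.Rig (β, c' + B.eps β - cc) := by
    rcases hβcase with hβΦ | hβ0
    · left
      refine ⟨hβΦ, ?_⟩
      have hc'cc : c' = cc := by
        rcases hc' with h | h
        · exact h
        · exfalso
          obtain ⟨hlv2, hco2⟩ := h2
          have hlv2' : c' + B.eps β ≤ cc + 1 := hlv2
          have hεβ : B.eps β = 0 := by
            have := B.eps_nonneg β
            omega
          have hpos := B.isPos_of_eps hεβ
          apply B.ne_zero_coord hβΦ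
          intro γ hγ
          have h3 : B.coord β γ + (c' + B.eps β) * B.coord B.highest γ
              ≤ B.coord (0:V) γ + (cc + 1) * B.coord B.highest γ := hco2 γ hγ
          rw [B.coord_zero] at h3
          have h5 : c' + B.eps β = cc + 1 := by omega
          rw [h5] at h3
          have h4 := hpos γ hγ
          omega
      rw [hc'cc]
      ring
    · right
      have hεβ : B.eps β = 0 := by rw [hβ0, B.eps_zero']
      refine ⟨hβ0, ?_⟩
      have hc'cc : c' = cc + 1 := by
        rcases hc' with h | h
        · exfalso
          obtain ⟨hlv1, hco1⟩ := h1
          have hlv1' : cc + B.eps α ≤ c' + B.eps β := hlv1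
          have hεα : B.eps α = 0 := by
            have := B.eps_nonneg α
            omega
          have hpos := B.isPos_of_eps hεα
          apply B.ne_zero_coord hα
          intro γ hγ
          have h3 : B.coord α γ + (cc + B.eps α) * B.coord B.highest γ
              ≤ B.coord β γ + (c' + B.eps β) * B.coord B.highest γ := hco1 γ hγ
          have h5 : cc + B.eps α = c' + B.eps β := by omega
          rw [h5] at h3
          rw [hβ0, B.coord_zero] at h3
          have h4 := hpos γ hγ
          omega
        · exact h
      rw [hc'cc, hεβ]
      ring
  have hle : B.affLe (α, B.eps α) (β, c' + B.eps β - cc) := by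
    have h := B.affLe_shift (-cc) h1
    have e1 : cc + B.eps α + -cc = B.eps α := by ring
    have e2 : c' + B.eps β + -cc = c' + B.eps β - cc := by ring
    rw [e1, e2] at h
    exact h
  have hgapnn : 0 ≤ B.Psi (β, c' + B.eps β - cc) - B.Psi (α, B.eps α) := by
    have := B.psi_mono hle
    omega
  obtain ⟨q, hqrig, hqle, hqsum, hqlvl⟩ :=
    B.engine (B.Psi (β, c' + B.eps β - cc) - B.Psi (α, B.eps α)).toNat
      (α, B.eps α) (β, c' + B.eps β - cc) hα rfl htoprig hle
      (Int.toNat_of_nonneg hgapnn).symm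
      (fun i => (a i, B.eps (a i))) (fun i => Or.inl ⟨ha i, rfl⟩)
      (by simpa using hsum1)
  refine ⟨fun i => (q i).1, fun i => c i + (q i).2 - B.eps ((q i).1),
    ?_, ?_, ?_, ?_, ?_, ?_⟩
  · intro i
    rcases hqrig i with ⟨hm, _⟩ | ⟨h0, _⟩
    · exact Or.inl (Finset.mem_coe.mpr hm)
    · exact Or.inr (Set.mem_singleton_iff.mpr h0)
  · intro i hbφ
    rcases hqrig i with ⟨hm, he⟩ | ⟨h0, he⟩
    · show 0 ≤ c i + (q i).2 - B.eps ((q i).1)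
      rw [← he]
      have := hc i
      omega
    · exact absurd (h0 ▸ hbφ) B.zero_not_mem
  · intro i hb0
    rcases hqrig i with ⟨hm, he⟩ | ⟨h0, he⟩
    · exact absurd (hb0 ▸ hm) B.zero_not_mem
    · show 1 ≤ (c i + (q i).2 - B.eps ((q i).1)) + B.eps ((q i).1)
      have := hc i
      omega
  · exact hqsum
  · have hexp : ∀ i : Fin t,
        (c i + (q i).2 - B.eps ((q i).1)) + B.eps ((q i).1) = c i + (q i).2 := by
      intro i
      ring
    rw [Finset.sum_congr rfl (fun i _ => hexp i)]
    rw [Finset.sum_add_distrib]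
    have hpl : ∑ i : Fin t, ((a i, B.eps (a i)) : V × ℤ).2 = ∑ i : Fin t, B.eps (a i) := rfl
    rw [hpl] at hqlvl
    have hs2 : ∑ i : Fin t, c i + ∑ i : Fin t, B.eps (a i) = cc + B.eps α := by
      rw [← Finset.sum_add_distrib]
      exact hsum2
    omega
  · intro i
    have hqi : B.affLe (a i, B.eps (a i)) ((q i).1, (q i).2) := by
      rw [Prod.mk.eta]
      exact hqle i
    have hsh := B.affLe_shift (c i) hqi
    have e1 : B.eps (a i) + c i = c i + B.eps (a i) := by ring
    have e2 : (q i).2 + c i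
        = (c i + (q i).2 - B.eps ((q i).1)) + B.eps ((q i).1) := by ring
    rw [e1, e2] at hsh
    constructor
    · exact hsh
    · have hw := B.rig_window (hqrig i)
      have hw' : B.affLe ((q i).1, (q i).2) ((0:V), (1:ℤ)) := by
        rw [Prod.mk.eta]
        exact hw
      have hsh2 := B.affLe_shift (c i) hw'
      have e3 : (1 : ℤ) + c i = c i + 1 := by ring
      rw [e2, e3] at hsh2
      exact hsh2
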